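/- arXiv:2212.13719 — 6 statements merged into one kernel-verified Lean document; each statement's English description precedes it below -/
import Mathlib

section
/- Let n be an even positive integer, let r and s be integers with 2 ≤ r ≤ s ≤ 2r−1, and let m = s−r+1. Then ex(n, LP^{(r)}_s) = ex(n, P^{(r)}_s) = C(n,r) − 2·h(n,r,m) − h(n,r−1,m), where C(n,r) is the binomial coefficient. -/
open Finset
open scoped Classical

/-- Edge set of the natural tight path `P^{(r)}_s` on vertex set `[s] = {1,…,s}`:
all intervals of `r` consecutive integers. -/
def pathEdges (r s : ℕ) : Finset (Finset ℕ) :=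
  (Finset.Icc 1 (s - r + 1)).image (fun i => Finset.Icc i (i + r - 1))

/-- Edge set of the loose path `LP^{(r)}_s`: only the first and last edges. -/
def loosePathEdges (r s : ℕ) : Finset (Finset ℕ) :=
  {Finset.Icc 1 r, Finset.Icc (s - r + 1) s}

/-- `C` is the edge set of a copy in `K^{(r)}_n` of the ordered hypergraph with
vertex set `[s]` and edge set `E`, i.e. the image of `E` under a strictly
increasing map `[s] → [n]`. -/
def IsCopy (n s : ℕ) (E : Finset (Finset ℕ)) (C : Finset (Finset ℕ)) : Prop :=
  ∃ f : ℕ → ℕ, StrictMonoOn f ↑(Finset.Icc 1 s) ∧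
    (∀ v ∈ Finset.Icc 1 s, f v ∈ Finset.Icc 1 n) ∧
    C = E.image (fun e => e.image f)

/-- A transversal: a set `T` of `r`-element subsets of `[n]` meeting every copy. -/
def IsTransversal (n r s : ℕ) (E : Finset (Finset ℕ)) (T : Finset (Finset ℕ)) : Prop :=
  T ⊆ (Finset.Icc 1 n).powersetCard r ∧
  ∀ C : Finset (Finset ℕ), IsCopy n s E C → ∃ e ∈ C, e ∈ T

/-- The transversal number `τ(n,H)`. -/
noncomputable def tau (n r s : ℕ) (E : Finset (Finset ℕ)) : ℕ :=
  sInf {m | ∃ T : Finset (Finset ℕ), IsTransversal n r s E T ∧ T.card = m}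

/-- A packing: an edge-disjoint family of copies. -/
def IsPacking (n s : ℕ) (E : Finset (Finset ℕ)) (P : Finset (Finset (Finset ℕ))) : Prop :=
  (∀ C ∈ P, IsCopy n s E C) ∧
  ∀ C ∈ P, ∀ C' ∈ P, C ≠ C' → Disjoint C C'

/-- The packing number `ν(n,H)`. -/
noncomputable def nu (n s : ℕ) (E : Finset (Finset ℕ)) : ℕ :=
  sSup {m | ∃ P : Finset (Finset (Finset ℕ)), IsPacking n s E P ∧ P.card = m}

/-- The ordered Turán number: maximum number of edges of a subgraph of
`K^{(r)}_n` containing no copy of the hypergraph with edge set `E`. -/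
noncomputable def exNum (n r s : ℕ) (E : Finset (Finset ℕ)) : ℕ :=
  sSup {m | ∃ G ⊆ (Finset.Icc 1 n).powersetCard r,
    (∀ C : Finset (Finset ℕ), IsCopy n s E C → ¬ C ⊆ G) ∧ G.card = m}

/-- `S ⊆ [n]` is `m`-left-biased. -/
def LeftBiased (n m : ℕ) (S : Finset ℕ) : Prop :=
  ∃ u ≤ n / 2, (S ∩ Finset.Icc 1 u).card = m ∧ S ∩ Finset.Icc (n + 1 - u) n = ∅

/-- `h(n,t,m)`: the number of `m`-left-biased `t`-element subsets of `[n]`. -/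
noncomputable def hcount (n t m : ℕ) : ℕ :=
  (((Finset.Icc 1 n).powersetCard t).filter (LeftBiased n m)).card

/-- A fractional transversal. -/
def IsFracTransversal (n r s : ℕ) (E : Finset (Finset ℕ)) (w : Finset ℕ → ℝ) : Prop :=
  (∀ e ∈ (Finset.Icc 1 n).powersetCard r, 0 ≤ w e) ∧
  ∀ C : Finset (Finset ℕ), IsCopy n s E C → 1 ≤ ∑ e ∈ C, w e

/-- The fractional transversal number `τ*(n,H)`. -/
noncomputable def tauStar (n r s : ℕ) (E : Finset (Finset ℕ)) : ℝ :=
  sInf {x : ℝ | ∃ w : Finset ℕ → ℝ, IsFracTransversal n r s E w ∧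
    x = ∑ e ∈ (Finset.Icc 1 n).powersetCard r, w e}

/-- A `k`-edge-labeling of the ordered complete graph on `[n]`. -/
def IsLabeling (n k : ℕ) (φ : ℕ → ℕ → ℕ) : Prop :=
  ∀ u v : ℕ, u ∈ Finset.Icc 1 n → v ∈ Finset.Icc 1 n → u < v → φ u v ∈ Finset.Icc 1 k

/-- The number of good triples `u < v < w` in `[n]` (those with `φ(uv) < φ(vw)`). -/
def goodCount (n : ℕ) (φ : ℕ → ℕ → ℕ) : ℕ :=
  (((Finset.Icc 1 n) ×ˢ (Finset.Icc 1 n) ×ˢ (Finset.Icc 1 n)).filter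
    (fun p => p.1 < p.2.1 ∧ p.2.1 < p.2.2 ∧ φ p.1 p.2.1 < φ p.2.1 p.2.2)).card

/-- The number of bad triples `u < v < w` in `[n]` (those with `φ(uv) ≥ φ(vw)`). -/
def badCount (n : ℕ) (φ : ℕ → ℕ → ℕ) : ℕ :=
  (((Finset.Icc 1 n) ×ˢ (Finset.Icc 1 n) ×ˢ (Finset.Icc 1 n)).filter
    (fun p => p.1 < p.2.1 ∧ p.2.1 < p.2.2 ∧ ¬ φ p.1 p.2.1 < φ p.2.1 p.2.2)).card

/-- `f(n,k)`: the maximum number of good triples over all `k`-edge-labelings of `[n]`. -/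
noncomputable def fmax (n k : ℕ) : ℕ :=
  sSup {m | ∃ φ : ℕ → ℕ → ℕ, IsLabeling n k φ ∧ goodCount n φ = m}

/-- A labeling is monotone if `φ(uv) ≤ φ(vw)` whenever `u < v < w` in `[n]`. -/
def IsMonotone (n : ℕ) (φ : ℕ → ℕ → ℕ) : Prop :=
  ∀ u v w : ℕ, u ∈ Finset.Icc 1 n → v ∈ Finset.Icc 1 n → w ∈ Finset.Icc 1 n →
    u < v → v < w → φ u v ≤ φ v w

/-- `Φ_L(v) = max{φ(uv) : u < v}`, with `Φ_L(1) = 0`. -/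
def PhiL (φ : ℕ → ℕ → ℕ) (v : ℕ) : ℕ := (Finset.Ico 1 v).sup (fun u => φ u v)

/-- `Φ_R(v) = min{φ(vw) : v < w ≤ n}`, with `Φ_R(n) = k+1`. -/
noncomputable def PhiR (n k : ℕ) (φ : ℕ → ℕ → ℕ) (v : ℕ) : ℕ :=
  if v = n then k + 1 else sInf {m | ∃ w ∈ Finset.Ioc v n, φ v w = m}

/-- `X_i = {v ∈ [n] : Φ_L(v) = i}`. -/
def XL (n : ℕ) (φ : ℕ → ℕ → ℕ) (i : ℕ) : Finset ℕ :=
  (Finset.Icc 1 n).filter (fun v => PhiL φ v = i)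

/-- `X̂_i = {v ∈ [n] : Φ_R(v) = i}`. -/
noncomputable def XR (n k : ℕ) (φ : ℕ → ℕ → ℕ) (i : ℕ) : Finset ℕ :=
  (Finset.Icc 1 n).filter (fun v => PhiR n k φ v = i)

noncomputable section

-- k-th smallest element (0-indexed), junk default 0
def nth (A : Finset ℕ) (k : ℕ) : ℕ :=
  if h : k < A.card then A.orderEmbOfFin rfl ⟨k, h⟩ else 0

lemma nth_lt (A : Finset ℕ) {k k' : ℕ} (h : k < k') (h' : k' < A.card) :
    nth A k < nth A k' := by
  rw [nth, nth, dif_pos (h.trans h'), dif_pos h']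
  exact (A.orderEmbOfFin rfl).strictMono (show (⟨k, h.trans h'⟩ : Fin A.card) < ⟨k', h'⟩ from h)

lemma nth_le (A : Finset ℕ) {k k' : ℕ} (h : k ≤ k') (h' : k' < A.card) :
    nth A k ≤ nth A k' := by
  rcases h.lt_or_eq with h | rfl
  · exact (nth_lt A h h').le
  · exact le_refl _

lemma nth_mem (A : Finset ℕ) {k : ℕ} (h : k < A.card) : nth A k ∈ A := by
  rw [nth, dif_pos h]; exact A.orderEmbOfFin_mem rfl ⟨k, h⟩

lemma nth_one_le {n : ℕ} {A : Finset ℕ} (hA : A ⊆ Finset.Icc 1 n) {k : ℕ} (h : k < A.card) :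
    1 ≤ nth A k := (Finset.mem_Icc.1 (hA (nth_mem A h))).1

lemma nth_le_n {n : ℕ} {A : Finset ℕ} (hA : A ⊆ Finset.Icc 1 n) {k : ℕ} (h : k < A.card) :
    nth A k ≤ n := (Finset.mem_Icc.1 (hA (nth_mem A h))).2

-- central: nth of image of locally strict monotone map
lemma nth_image {t : ℕ} {f : ℕ → ℕ} (hf : ∀ ⦃k k'⦄, k < k' → k' < t → f k < f k')
    {k : ℕ} (hk : k < t) : nth ((Finset.range t).image f) k = f k := by
  set A := (Finset.range t).image f with hA
  have hinj : Set.InjOn f ↑(Finset.range t) := by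
    intro x hx y hy hxy
    simp only [coe_range, Set.mem_Iio] at hx hy
    by_contra hne
    rcases Nat.lt_or_ge x y with h | h
    · exact absurd hxy (hf h hy).ne
    · exact absurd hxy.symm (hf (lt_of_le_of_ne h (Ne.symm hne)) hx).ne
  have hcard : A.card = t := by
    rw [hA, Finset.card_image_of_injOn hinj, Finset.card_range]
  have hmono : StrictMono (fun i : Fin A.card => f i.val) := by
    intro i j hij
    exact hf hij (by omega)
  have hfs : ∀ i : Fin A.card, f i.val ∈ A := by
    intro i
    exact Finset.mem_image_of_mem f (Finset.mem_range.2 (by omega))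
  have := Finset.orderEmbOfFin_unique (f := fun i : Fin A.card => f i.val) rfl hfs hmono
  have hk' : k < A.card := by omega
  rw [nth, dif_pos hk']
  exact (congrFun this ⟨k, hk'⟩).symm

lemma image_nth (A : Finset ℕ) : (Finset.range A.card).image (nth A) = A := by
  apply Finset.eq_of_subset_of_card_le
  · intro x hx
    rcases Finset.mem_image.1 hx with ⟨k, hk, rfl⟩
    exact nth_mem A (Finset.mem_range.1 hk)
  · apply le_of_eq
    rw [Finset.card_image_of_injOn, Finset.card_range]
    intro x hx y hy hxy
    simp only [coe_range, Set.mem_Iio] at hx hy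
    by_contra hne
    rcases Nat.lt_or_ge x y with h | h
    · exact absurd hxy (nth_lt A h hy).ne
    · exact absurd hxy.symm (nth_lt A (lt_of_le_of_ne h (Ne.symm hne)) hx).ne

lemma exists_nth {A : Finset ℕ} {x : ℕ} (hx : x ∈ A) : ∃ k < A.card, nth A k = x := by
  conv at hx => rw [← image_nth A]
  rcases Finset.mem_image.1 hx with ⟨k, hk, h⟩
  exact ⟨k, Finset.mem_range.1 hk, h⟩

end
noncomputable section

-- chain functions: 1-based position `v`
def chainL (n r m : ℕ) (A : Finset ℕ) (v : ℕ) : ℕ :=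
  if v ≤ r then nth A (v - 1) else n + 1 + nth A (v - r - 1) - nth A (m - 1)

def chainR (n r m : ℕ) (B : Finset ℕ) (v : ℕ) : ℕ :=
  if v ≤ m - 1 then nth B (r - m + v) - nth B (r - m) else (nth B (v - m) + 0 * n)

def CondL (n r m : ℕ) (A : Finset ℕ) : Prop := nth A (m - 1) + nth A (r - 1) ≤ n + 1
def CondR (n r m : ℕ) (B : Finset ℕ) : Prop := n + 2 ≤ nth B 0 + nth B (r - m)

lemma chainL_mono {n r m s : ℕ} (hm1 : 1 ≤ m) (hmr : m ≤ r) (hs : s = r + m - 1)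
    {A : Finset ℕ} (hA1 : A ⊆ Finset.Icc 1 n) (hA2 : A.card = r)
    (hL : CondL n r m A) {v v' : ℕ} (h1 : 1 ≤ v) (h2 : v < v') (h3 : v' ≤ s) :
    chainL n r m A v < chainL n r m A v' := by
  rw [chainL, chainL]
  rcases le_or_gt v' r with hc | hc
  · rw [if_pos (show v ≤ r by omega), if_pos (show v' ≤ r by omega)]
    exact nth_lt A (by omega) (by omega)
  · rw [if_neg (show ¬ v' ≤ r by omega)]
    have hb1 : 1 ≤ nth A (v' - r - 1) := nth_one_le hA1 (by omega)
    have hbm : nth A (m-1) ≤ n := nth_le_n hA1 (by omega)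
    rcases le_or_gt v r with hd | hd
    · rw [if_pos (show v ≤ r by omega)]
      have h5 : nth A (v-1) ≤ nth A (r-1) := nth_le A (by omega) (by omega)
      rw [CondL] at hL
      omega
    · rw [if_neg (show ¬ v ≤ r by omega)]
      have h5 : nth A (v - r - 1) < nth A (v' - r - 1) := nth_lt A (by omega) (by omega)
      omega

lemma chainL_mem {n r m s : ℕ} (hm1 : 1 ≤ m) (hmr : m ≤ r) (hs : s = r + m - 1)
    {A : Finset ℕ} (hA1 : A ⊆ Finset.Icc 1 n) (hA2 : A.card = r)
    {v : ℕ} (h1 : 1 ≤ v) (h3 : v ≤ s) : chainL n r m A v ∈ Finset.Icc 1 n := by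
  rw [chainL, Finset.mem_Icc]
  rcases le_or_gt v r with hc | hc
  · rw [if_pos (show v ≤ r by omega)]
    exact ⟨nth_one_le hA1 (by omega), nth_le_n hA1 (by omega)⟩
  · rw [if_neg (show ¬ v ≤ r by omega)]
    have hb1 : 1 ≤ nth A (v - r - 1) := nth_one_le hA1 (by omega)
    have hbm : nth A (m-1) ≤ n := nth_le_n hA1 (by omega)
    have h5 : nth A (v - r - 1) < nth A (m - 1) := nth_lt A (by omega) (by omega)
    omega

lemma chainR_mono {n r m s : ℕ} (hm1 : 1 ≤ m) (hmr : m ≤ r) (hs : s = r + m - 1)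
    {B : Finset ℕ} (hB1 : B ⊆ Finset.Icc 1 n) (hB2 : B.card = r)
    (hR : CondR n r m B) {v v' : ℕ} (h1 : 1 ≤ v) (h2 : v < v') (h3 : v' ≤ s) :
    chainR n r m B v < chainR n r m B v' := by
  rw [chainR, chainR, CondR] at *
  rcases le_or_gt v' (m-1) with hc | hc
  · rw [if_pos (show v ≤ m - 1 by omega), if_pos (show v' ≤ m - 1 by omega)]
    have h5 : nth B (r - m + v) < nth B (r - m + v') := nth_lt B (by omega) (by omega)
    have h6 : nth B (r - m) ≤ nth B (r - m + v) := nth_le B (by omega) (by omega)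
    omega
  · rw [if_neg (show ¬ v' ≤ m - 1 by omega)]
    rcases le_or_gt v (m-1) with hd | hd
    · rw [if_pos (show v ≤ m - 1 by omega)]
      have h5 : nth B (r - m + v) ≤ nth B (r-1) := nth_le B (by omega) (by omega)
      have h6 : nth B (r - m) ≤ nth B (r - m + v) := nth_le B (by omega) (by omega)
      have h7 : nth B (r-1) ≤ n := nth_le_n hB1 (by omega)
      have h8 : nth B 0 ≤ nth B (v' - m) := nth_le B (by omega) (by omega)
      omega
    · rw [if_neg (show ¬ v ≤ m - 1 by omega)]
      have := nth_lt B (show v - m < v' - m by omega) (show v' - m < B.card by omega)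
      omega

lemma chainR_mem {n r m s : ℕ} (hm1 : 1 ≤ m) (hmr : m ≤ r) (hs : s = r + m - 1)
    {B : Finset ℕ} (hB1 : B ⊆ Finset.Icc 1 n) (hB2 : B.card = r)
    {v : ℕ} (h1 : 1 ≤ v) (h3 : v ≤ s) : chainR n r m B v ∈ Finset.Icc 1 n := by
  rw [chainR, Finset.mem_Icc]
  rcases le_or_gt v (m-1) with hc | hc
  · rw [if_pos (show v ≤ m - 1 by omega)]
    have h5 : nth B (r - m) < nth B (r - m + v) := nth_lt B (by omega) (by omega)
    have h7 : nth B (r - m + v) ≤ n := nth_le_n hB1 (by omega)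
    omega
  · rw [if_neg (show ¬ v ≤ m - 1 by omega)]
    have := nth_one_le hB1 (show v - m < B.card by omega)
    have := nth_le_n hB1 (show v - m < B.card by omega)
    omega

lemma keyLL_aux {n r m : ℕ} (hm1 : 1 ≤ m) (hmr : m ≤ r) {A A' : Finset ℕ}
    (hA1 : A ⊆ Finset.Icc 1 n) (hA2 : A.card = r)
    (hA1' : A' ⊆ Finset.Icc 1 n) (hA2' : A'.card = r)
    (hL : CondL n r m A) (hL' : CondL n r m A')
    {i i' : ℕ} (hil : 1 ≤ i) (him : i ≤ m) (hil' : 1 ≤ i') (him' : i' ≤ m)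
    (hlt : i < i')
    (H : ∀ k < r, chainL n r m A (i + k) = chainL n r m A' (i' + k)) : False := by
  have e1 := H (m - i') (by omega)
  have e2 := H (r + 1 - i') (by omega)
  rw [chainL, chainL, if_pos (show i + (m - i') ≤ r by omega),
    if_pos (show i' + (m - i') ≤ r by omega),
    (show i + (m - i') - 1 = m - (i' - i) - 1 by omega),
    (show i' + (m - i') - 1 = m - 1 by omega)] at e1
  rw [chainL, chainL, if_pos (show i + (r + 1 - i') ≤ r by omega),
    if_neg (show ¬ i' + (r + 1 - i') ≤ r by omega),
    (show i + (r + 1 - i') - 1 = r - (i' - i) by omega),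
    (show i' + (r + 1 - i') - r - 1 = 0 by omega)] at e2
  have f1 : nth A (m - (i' - i) - 1) < nth A (m - 1) := nth_lt A (by omega) (by omega)
  have f2 : nth A (r - (i' - i)) ≤ nth A (r - 1) := nth_le A (by omega) (by omega)
  have f3 : 1 ≤ nth A' 0 := nth_one_le hA1' (by omega)
  have f4 : nth A' (m - 1) ≤ n := nth_le_n hA1' (by omega)
  rw [CondL] at hL
  omega

lemma keyLL {n r m : ℕ} (hm1 : 1 ≤ m) (hmr : m ≤ r) {A A' : Finset ℕ}
    (hA1 : A ⊆ Finset.Icc 1 n) (hA2 : A.card = r)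
    (hA1' : A' ⊆ Finset.Icc 1 n) (hA2' : A'.card = r)
    (hL : CondL n r m A) (hL' : CondL n r m A')
    {i i' : ℕ} (hil : 1 ≤ i) (him : i ≤ m) (hil' : 1 ≤ i') (him' : i' ≤ m)
    (H : ∀ k < r, chainL n r m A (i + k) = chainL n r m A' (i' + k)) : i = i' ∧ A = A' := by
  have hii : i = i' := by
    rcases Nat.lt_trichotomy i i' with h | h | h
    · exact absurd (keyLL_aux hm1 hmr hA1 hA2 hA1' hA2' hL hL' hil him hil' him' h H) id
    · exact h
    · exact absurd (keyLL_aux hm1 hmr hA1' hA2' hA1 hA2 hL' hL hil' him' hil him h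
        (fun k hk => (H k hk).symm)) id
  subst hii
  have hpt : ∀ k < r, nth A k = nth A' k := by
    have hmeq : nth A (m-1) = nth A' (m-1) := by
      have h0 := H (m - i) (by omega)
      rwa [chainL, chainL, if_pos (show i + (m-i) ≤ r by omega),
        if_pos (show i + (m-i) ≤ r by omega),
        (show i + (m - i) - 1 = m - 1 by omega)] at h0
    intro k hk
    rcases Nat.lt_or_ge k (i-1) with hki | hki
    · have h0 := H (r + k + 1 - i) (by omega)
      rw [chainL, chainL, if_neg (show ¬ i + (r + k + 1 - i) ≤ r by omega),
        if_neg (show ¬ i + (r + k + 1 - i) ≤ r by omega),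
        (show i + (r + k + 1 - i) - r - 1 = k by omega)] at h0
      have g1 : nth A (m-1) ≤ n := nth_le_n hA1 (by omega)
      have g2 : nth A' (m-1) ≤ n := nth_le_n hA1' (by omega)
      omega
    · have h0 := H (k + 1 - i) (by omega)
      rwa [chainL, chainL, if_pos (show i + (k + 1 - i) ≤ r by omega),
        if_pos (show i + (k + 1 - i) ≤ r by omega),
        (show i + (k + 1 - i) - 1 = k by omega)] at h0
  have him2 : (Finset.range r).image (nth A) = (Finset.range r).image (nth A') :=
    Finset.image_congr (fun x hx => hpt x (Finset.mem_range.1 (by simpa using hx)))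
  refine ⟨rfl, ?_⟩
  calc A = (Finset.range A.card).image (nth A) := (image_nth A).symm
    _ = (Finset.range r).image (nth A) := by rw [hA2]
    _ = (Finset.range r).image (nth A') := him2
    _ = (Finset.range A'.card).image (nth A') := by rw [hA2']
    _ = A' := image_nth A'

end
noncomputable section

lemma keyRR_aux {n r m : ℕ} (hm1 : 1 ≤ m) (hmr : m ≤ r) {B B' : Finset ℕ}
    (hB1 : B ⊆ Finset.Icc 1 n) (hB2 : B.card = r)
    (hB1' : B' ⊆ Finset.Icc 1 n) (hB2' : B'.card = r)
    (hR : CondR n r m B) (hR' : CondR n r m B')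
    {j j' : ℕ} (hjl : 1 ≤ j) (hjm : j ≤ m) (hjl' : 1 ≤ j') (hjm' : j' ≤ m)
    (hlt : j' < j)
    (H : ∀ k < r, chainR n r m B (j + k) = chainR n r m B' (j' + k)) : False := by
  have ea := H (m - j) (by omega)
  have eb := H (r - j') (by omega)
  rw [chainR, chainR, if_neg (show ¬ j + (m - j) ≤ m - 1 by omega),
    if_pos (show j' + (m - j) ≤ m - 1 by omega),
    (show j + (m - j) - m = 0 by omega),
    (show r - m + (j' + (m - j)) = r - (j - j') by omega)] at ea
  rw [chainR, chainR, if_neg (show ¬ j + (r - j') ≤ m - 1 by omega),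
    if_neg (show ¬ j' + (r - j') ≤ m - 1 by omega),
    (show j + (r - j') - m = r + (j - j') - m by omega),
    (show j' + (r - j') - m = r - m by omega)] at eb
  have g1 : nth B (r - m) < nth B (r + (j - j') - m) := nth_lt B (by omega) (by omega)
  have g2 : nth B' (r - (j - j')) ≤ n := nth_le_n hB1' (by omega)
  have g3 : nth B' (r - m) ≤ nth B' (r - (j - j')) := nth_le B' (by omega) (by omega)
  rw [CondR] at hR
  omega

lemma keyRR {n r m : ℕ} (hm1 : 1 ≤ m) (hmr : m ≤ r) {B B' : Finset ℕ}
    (hB1 : B ⊆ Finset.Icc 1 n) (hB2 : B.card = r)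
    (hB1' : B' ⊆ Finset.Icc 1 n) (hB2' : B'.card = r)
    (hR : CondR n r m B) (hR' : CondR n r m B')
    {j j' : ℕ} (hjl : 1 ≤ j) (hjm : j ≤ m) (hjl' : 1 ≤ j') (hjm' : j' ≤ m)
    (H : ∀ k < r, chainR n r m B (j + k) = chainR n r m B' (j' + k)) : j = j' ∧ B = B' := by
  have hjj : j = j' := by
    rcases Nat.lt_trichotomy j j' with h | h | h
    · exact absurd (keyRR_aux hm1 hmr hB1' hB2' hB1 hB2 hR' hR hjl' hjm' hjl hjm h
        (fun k hk => (H k hk).symm)) id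
    · exact h
    · exact absurd (keyRR_aux hm1 hmr hB1 hB2 hB1' hB2' hR hR' hjl hjm hjl' hjm' h H) id
  subst hjj
  have hpt : ∀ k < r, nth B k = nth B' k := by
    have hqeq : nth B (r-m) = nth B' (r-m) := by
      have h0 := H (r - j) (by omega)
      rw [chainR, chainR, if_neg (show ¬ j + (r - j) ≤ m - 1 by omega),
        if_neg (show ¬ j + (r - j) ≤ m - 1 by omega),
        (show j + (r - j) - m = r - m by omega)] at h0
      omega
    intro k hk
    rcases Nat.lt_or_ge k (r - m + j) with hki | hki
    · -- b-zone: position m + k, need m + k in window: k ≤ j + r - 1 - m i.e. k < r-m+j ✓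
      have h0 := H (m + k - j) (by omega)
      rw [chainR, chainR, if_neg (show ¬ j + (m + k - j) ≤ m - 1 by omega),
        if_neg (show ¬ j + (m + k - j) ≤ m - 1 by omega),
        (show j + (m + k - j) - m = k by omega)] at h0
      omega
    · -- d-zone: k = r - m + p, position p with j ≤ p ≤ m-1 : p = k - (r-m)
      have h0 := H (k - (r - m) - j) (by omega)
      rw [chainR, chainR, if_pos (show j + (k - (r - m) - j) ≤ m - 1 by omega),
        if_pos (show j + (k - (r - m) - j) ≤ m - 1 by omega),
        (show r - m + (j + (k - (r - m) - j)) = k by omega)] at h0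
      have g1 : nth B (r - m) ≤ nth B k := nth_le B (by omega) (by omega)
      have g2 : nth B' (r - m) ≤ nth B' k := nth_le B' (by omega) (by omega)
      omega
  have him2 : (Finset.range r).image (nth B) = (Finset.range r).image (nth B') :=
    Finset.image_congr (fun x hx => hpt x (Finset.mem_range.1 (by simpa using hx)))
  refine ⟨rfl, ?_⟩
  calc B = (Finset.range B.card).image (nth B) := (image_nth B).symm
    _ = (Finset.range r).image (nth B) := by rw [hB2]
    _ = (Finset.range r).image (nth B') := him2
    _ = (Finset.range B'.card).image (nth B') := by rw [hB2']
    _ = B' := image_nth B'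

lemma keyLR {n r m : ℕ} (hm1 : 1 ≤ m) (hmr : m ≤ r) {A B : Finset ℕ}
    (hA1 : A ⊆ Finset.Icc 1 n) (hA2 : A.card = r)
    (hB1 : B ⊆ Finset.Icc 1 n) (hB2 : B.card = r)
    (hL : CondL n r m A) (hR : CondR n r m B)
    {i j : ℕ} (hil : 1 ≤ i) (him : i ≤ m) (hjl : 1 ≤ j) (hjm : j ≤ m)
    (H : ∀ k < r, chainL n r m A (i + k) = chainR n r m B (j + k)) : False := by
  rw [CondL] at hL
  rw [CondR] at hR
  rcases le_or_gt i j with hij | hij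
  · -- case 1 : i ≤ j
    have e1 := H (m - i) (by omega)
    have e2 := H (r - j + (j - i)) (by omega)
    rw [chainL, chainR, if_pos (show i + (m - i) ≤ r by omega),
      if_neg (show ¬ j + (m - i) ≤ m - 1 by omega),
      (show i + (m - i) - 1 = m - 1 by omega),
      (show j + (m - i) - m = j - i by omega)] at e1
    rw [chainL, chainR, if_pos (show i + (r - j + (j - i)) ≤ r by omega),
      if_neg (show ¬ j + (r - j + (j - i)) ≤ m - 1 by omega),
      (show i + (r - j + (j - i)) - 1 = r - 1 by omega),
      (show j + (r - j + (j - i)) - m = r - m + (j - i) by omega)] at e2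
    have g1 : nth B 0 ≤ nth B (j - i) := nth_le B (by omega) (by omega)
    have g2 : nth B (r - m) ≤ nth B (r - m + (j - i)) := nth_le B (by omega) (by omega)
    omega
  · rcases le_or_gt i (j + (r - m)) with hiq | hiq
    · -- case 2 : j < i ≤ j + (r-m)
      have e1 := H (m - i) (by omega)
      have e2 := H (r - j) (by omega)
      rw [chainL, chainR, if_pos (show i + (m - i) ≤ r by omega),
        if_pos (show j + (m - i) ≤ m - 1 by omega),
        (show i + (m - i) - 1 = m - 1 by omega),
        (show r - m + (j + (m - i)) = r - (i - j) by omega)] at e1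
      rw [chainL, chainR, if_neg (show ¬ i + (r - j) ≤ r by omega),
        if_neg (show ¬ j + (r - j) ≤ m - 1 by omega),
        (show i + (r - j) - r - 1 = i - j - 1 by omega),
        (show j + (r - j) - m = r - m by omega)] at e2
      have g1 : nth B (r - (i - j)) ≤ n := nth_le_n hB1 (by omega)
      have g2 : nth B (r - m) ≤ nth B (r - (i - j)) := nth_le B (by omega) (by omega)
      have g3 : 1 ≤ nth A (i - j - 1) := nth_one_le hA1 (by omega)
      have g4 : nth A (m - 1) ≤ n := nth_le_n hA1 (by omega)
      omega
    · -- case 3 : i > j + (r-m)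
      have e1 := H (m - i) (by omega)
      have e2 := H (m - j) (by omega)
      rw [chainL, chainR, if_pos (show i + (m - i) ≤ r by omega),
        if_pos (show j + (m - i) ≤ m - 1 by omega),
        (show i + (m - i) - 1 = m - 1 by omega),
        (show r - m + (j + (m - i)) = r - (i - j) by omega)] at e1
      rw [chainL, chainR, if_neg (show ¬ i + (m - j) ≤ r by omega),
        if_neg (show ¬ j + (m - j) ≤ m - 1 by omega),
        (show i + (m - j) - r - 1 = i - j - (r - m) - 1 by omega),
        (show j + (m - j) - m = 0 by omega)] at e2
      have g1 : nth B 0 ≤ nth B (r - m) := nth_le B (by omega) (by omega)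
      have g2 : nth B (r - (i - j)) ≤ n := nth_le_n hB1 (by omega)
      have g3 : nth B (r - m) ≤ nth B (r - (i - j)) := nth_le B (by omega) (by omega)
      have g4 : 1 ≤ nth A (i - j - (r - m) - 1) := nth_one_le hA1 (by omega)
      have g5 : nth A (m - 1) ≤ n := nth_le_n hA1 (by omega)
      omega

end
noncomputable section
open Finset

lemma condLR_false {n r m : ℕ} (hm1 : 1 ≤ m) (hmr : m ≤ r) {A : Finset ℕ}
    (hA1 : A ⊆ Finset.Icc 1 n) (hA2 : A.card = r)
    (hL : CondL n r m A) (hR : CondR n r m A) : False := by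
  rw [CondL] at hL; rw [CondR] at hR
  have h1 : nth A 0 ≤ nth A (m - 1) := nth_le A (by omega) (by omega)
  have h2 : nth A (r - m) ≤ nth A (r - 1) := nth_le A (by omega) (by omega)
  omega

lemma image_Icc_window (u : ℕ → ℕ) (i r : ℕ) (hr : 1 ≤ r) :
    (Finset.Icc i (i + r - 1)).image u = (Finset.range r).image (fun k => u (i + k)) := by
  have h : Finset.Icc i (i + r - 1) = (Finset.range r).image (fun k => i + k) := by
    ext a
    simp only [Finset.mem_Icc, Finset.mem_image, Finset.mem_range]
    constructor
    · intro ha; exact ⟨a - i, by omega, by omega⟩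
    · rintro ⟨k, hk, rfl⟩; omega
  rw [h, Finset.image_image]
  rfl

lemma nth_window {u : ℕ → ℕ} {n r s i : ℕ}
    (hmono : ∀ v v', 1 ≤ v → v < v' → v' ≤ s → u v < u v')
    (hi1 : 1 ≤ i) (hirs : i + r - 1 ≤ s) (hr : 1 ≤ r) {k : ℕ} (hk : k < r) :
    nth ((Finset.range r).image (fun k => u (i + k))) k = u (i + k) := by
  exact nth_image (fun a b hab hb => hmono (i+a) (i+b) (by omega) (by omega) (by omega)) hk

lemma window_mem_P {u : ℕ → ℕ} {n r s i : ℕ}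
    (hmono : ∀ v v', 1 ≤ v → v < v' → v' ≤ s → u v < u v')
    (hmem : ∀ v, 1 ≤ v → v ≤ s → u v ∈ Finset.Icc 1 n)
    (hi1 : 1 ≤ i) (hirs : i + r - 1 ≤ s) (hr : 1 ≤ r) :
    (Finset.range r).image (fun k => u (i + k)) ∈ (Finset.Icc 1 n).powersetCard r := by
  rw [Finset.mem_powersetCard]
  constructor
  · intro x hx
    rcases Finset.mem_image.1 hx with ⟨k, hk, rfl⟩
    rw [Finset.mem_range] at hk
    exact hmem (i+k) (by omega) (by omega)
  · rw [Finset.card_image_of_injOn, Finset.card_range]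
    intro a ha b hb hab
    simp only [Finset.coe_range, Set.mem_Iio] at ha hb
    by_contra hne
    rcases Nat.lt_or_ge a b with h | h
    · exact absurd hab (hmono (i+a) (i+b) (by omega) (by omega) (by omega)).ne
    · exact absurd hab.symm (hmono (i+b) (i+a) (by omega) (by omega) (by omega)).ne

/-- main upper bound -/
theorem upper_main {n r s m : ℕ} (hr2 : 2 ≤ r) (hm1 : 1 ≤ m) (hmr : m ≤ r)
    (hs : s = r + m - 1)
    {G : Finset (Finset ℕ)} (hG : G ⊆ (Finset.Icc 1 n).powersetCard r)
    (hfree : ∀ C, IsCopy n s (pathEdges r s) C → ¬ C ⊆ G) :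
    G.card + ((((Finset.Icc 1 n).powersetCard r).filter (CondL n r m)).card
        + (((Finset.Icc 1 n).powersetCard r).filter (CondR n r m)).card) ≤ n.choose r := by
  classical
  set P := (Finset.Icc 1 n).powersetCard r with hP
  have hPcard : P.card = n.choose r := by
    rw [hP, Finset.card_powersetCard, Nat.card_Icc]
    simp
  set LF := P.filter (CondL n r m) with hLF
  set RF := P.filter (CondR n r m) with hRF
  have hmemP : ∀ A ∈ P, A ⊆ Finset.Icc 1 n ∧ A.card = r := by
    intro A hA; exact Finset.mem_powersetCard.1 hA
  have hdisj : Disjoint LF RF := by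
    rw [Finset.disjoint_left]
    intro A hAL hAR
    rw [hLF, Finset.mem_filter] at hAL
    rw [hRF, Finset.mem_filter] at hAR
    obtain ⟨h1, h2⟩ := hmemP A hAL.1
    exact condLR_false hm1 hmr h1 h2 hAL.2 hAR.2
  set chT : Finset ℕ → ℕ → ℕ :=
    fun A => if CondL n r m A then chainL n r m A else chainR n r m A with hchT
  have hkey : ∀ A ∈ LF ∪ RF, (∀ v v', 1 ≤ v → v < v' → v' ≤ s → chT A v < chT A v')
      ∧ (∀ v, 1 ≤ v → v ≤ s → chT A v ∈ Finset.Icc 1 n) := by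
    intro A hA
    rcases Finset.mem_union.1 hA with hA | hA
    · rw [hLF, Finset.mem_filter] at hA
      obtain ⟨h1, h2⟩ := hmemP A hA.1
      have hc := hA.2
      rw [hchT]
      simp only [if_pos hc]
      exact ⟨fun v v' a b c => chainL_mono hm1 hmr hs h1 h2 hc a b c,
        fun v a b => chainL_mem hm1 hmr hs h1 h2 a b⟩
    · rw [hRF, Finset.mem_filter] at hA
      obtain ⟨h1, h2⟩ := hmemP A hA.1
      have hc := hA.2
      have hnc : ¬ CondL n r m A := fun hcl => condLR_false hm1 hmr h1 h2 hcl hc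
      rw [hchT]
      simp only [if_neg hnc]
      exact ⟨fun v v' a b c => chainR_mono hm1 hmr hs h1 h2 hc a b c,
        fun v a b => chainR_mem hm1 hmr hs h1 h2 a b⟩
  have hsel : ∀ A, ∃ W i, A ∈ LF ∪ RF →
      (W ∈ P ∧ W ∉ G ∧ 1 ≤ i ∧ i ≤ m ∧
        W = (Finset.range r).image (fun k => chT A (i + k))) := by
    intro A
    by_cases hA : A ∈ LF ∪ RF
    · obtain ⟨hmono, hmem⟩ := hkey A hA
      have hcopy : IsCopy n s (pathEdges r s)
          ((pathEdges r s).image (fun e => e.image (chT A))) := by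
        refine ⟨chT A, ?_, ?_, rfl⟩
        · intro x hx y hy hxy
          rw [Finset.coe_Icc, Set.mem_Icc] at hx hy
          exact hmono x y hx.1 hxy hy.2
        · intro v hv
          rw [Finset.mem_Icc] at hv
          exact hmem v hv.1 hv.2
      obtain ⟨e, he, heG⟩ := Finset.not_subset.1 (hfree _ hcopy)
      obtain ⟨e0, he0, rfl⟩ := Finset.mem_image.1 he
      rw [pathEdges] at he0
      obtain ⟨i, hi, rfl⟩ := Finset.mem_image.1 he0
      rw [Finset.mem_Icc] at hi
      have him : i ≤ m := by omega
      have hi1 : 1 ≤ i := hi.1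
      refine ⟨_, i, fun _ => ⟨?_, heG, hi1, him, ?_⟩⟩
      · rw [image_Icc_window _ _ _ (by omega)]
        exact window_mem_P (s := s) hmono hmem hi1 (by omega) (by omega)
      · rw [image_Icc_window _ _ _ (by omega)]
    · exact ⟨∅, 0, fun h => absurd h hA⟩
  choose W I hWI using hsel
  have hWmem : ∀ A ∈ LF ∪ RF, W A ∈ P \ G := by
    intro A hA
    obtain ⟨h1, h2, _⟩ := hWI A hA
    exact Finset.mem_sdiff.2 ⟨h1, h2⟩
  have hinj : Set.InjOn W ↑(LF ∪ RF) := by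
    intro A hA A' hA' hWW
    rw [Finset.mem_coe] at hA hA'
    obtain ⟨hP1, hG1, hi1, him1, hEq1⟩ := hWI A hA
    obtain ⟨hP2, hG2, hi2, him2, hEq2⟩ := hWI A' hA'
    obtain ⟨hmono1, hmem1⟩ := hkey A hA
    obtain ⟨hmono2, hmem2⟩ := hkey A' hA'
    have hpt : ∀ k < r, chT A (I A + k) = chT A' (I A' + k) := by
      intro k hk
      have u1 : nth (W A) k = chT A (I A + k) := by
        rw [hEq1]; exact nth_window (n := n) hmono1 hi1 (by omega) (by omega) hk
      have u2 : nth (W A') k = chT A' (I A' + k) := by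
        rw [hEq2]; exact nth_window (n := n) hmono2 hi2 (by omega) (by omega) hk
      rw [← u1, ← u2, hWW]
    rcases Finset.mem_union.1 hA with hAL | hAR <;> rcases Finset.mem_union.1 hA' with hAL' | hAR'
    · rw [hLF, Finset.mem_filter] at hAL hAL'
      obtain hs1 := hmemP A hAL.1
      have hc1 := hAL.2
      obtain hs2 := hmemP A' hAL'.1
      have hc2 := hAL'.2
      have hpt' : ∀ k < r, chainL n r m A (I A + k) = chainL n r m A' (I A' + k) := by
        intro k hk
        have := hpt k hk
        simpa only [chT, if_pos hc1, if_pos hc2] using this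
      exact (keyLL hm1 hmr hs1.1 hs1.2 hs2.1 hs2.2 hc1 hc2 hi1 him1 hi2 him2 hpt').2
    · rw [hLF, Finset.mem_filter] at hAL
      rw [hRF, Finset.mem_filter] at hAR'
      obtain hs1 := hmemP A hAL.1
      have hc1 := hAL.2
      obtain hs2 := hmemP A' hAR'.1
      have hc2 := hAR'.2
      have hnc2 : ¬ CondL n r m A' := fun hcl => condLR_false hm1 hmr hs2.1 hs2.2 hcl hc2
      have hpt' : ∀ k < r, chainL n r m A (I A + k) = chainR n r m A' (I A' + k) := by
        intro k hk
        have := hpt k hk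
        simpa only [chT, if_pos hc1, if_neg hnc2] using this
      exact absurd (keyLR hm1 hmr hs1.1 hs1.2 hs2.1 hs2.2 hc1 hc2 hi1 him1 hi2 him2 hpt') id
    · rw [hRF, Finset.mem_filter] at hAR
      rw [hLF, Finset.mem_filter] at hAL'
      obtain hs1 := hmemP A hAR.1
      have hc1 := hAR.2
      obtain hs2 := hmemP A' hAL'.1
      have hc2 := hAL'.2
      have hnc1 : ¬ CondL n r m A := fun hcl => condLR_false hm1 hmr hs1.1 hs1.2 hcl hc1
      have hpt' : ∀ k < r, chainL n r m A' (I A' + k) = chainR n r m A (I A + k) := by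
        intro k hk
        have := (hpt k hk).symm
        simpa only [chT, if_pos hc2, if_neg hnc1] using this
      exact absurd (keyLR hm1 hmr hs2.1 hs2.2 hs1.1 hs1.2 hc2 hc1 hi2 him2 hi1 him1 hpt') id
    · rw [hRF, Finset.mem_filter] at hAR hAR'
      obtain hs1 := hmemP A hAR.1
      have hc1 := hAR.2
      obtain hs2 := hmemP A' hAR'.1
      have hc2 := hAR'.2
      have hnc1 : ¬ CondL n r m A := fun hcl => condLR_false hm1 hmr hs1.1 hs1.2 hcl hc1
      have hnc2 : ¬ CondL n r m A' := fun hcl => condLR_false hm1 hmr hs2.1 hs2.2 hcl hc2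
      have hpt' : ∀ k < r, chainR n r m A (I A + k) = chainR n r m A' (I A' + k) := by
        intro k hk
        have := hpt k hk
        simpa only [chT, if_neg hnc1, if_neg hnc2] using this
      exact (keyRR hm1 hmr hs1.1 hs1.2 hs2.1 hs2.2 hc1 hc2 hi1 him1 hi2 him2 hpt').2
  have hcard1 : (LF ∪ RF).card ≤ (P \ G).card :=
    Finset.card_le_card_of_injOn W hWmem hinj
  have hcard2 : (P \ G).card = P.card - G.card := Finset.card_sdiff_of_subset hG
  have hcard3 : (LF ∪ RF).card = LF.card + RF.card := Finset.card_union_of_disjoint hdisj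
  have hGP : G.card ≤ P.card := Finset.card_le_card hG
  omega

end
noncomputable section
open Finset

lemma erase_max_eq {r : ℕ} {A : Finset ℕ} (hA2 : A.card = r) (hr : 1 ≤ r) :
    A.erase (nth A (r-1)) = (Finset.range (r-1)).image (nth A) := by
  ext x
  constructor
  · intro hx
    obtain ⟨hne, hxA⟩ := Finset.mem_erase.1 hx
    obtain ⟨k, hk, rfl⟩ := exists_nth hxA
    have hk' : k < r - 1 := by
      rcases Nat.lt_or_ge k (r-1) with h | h
      · exact h
      · exfalso; apply hne; congr 1; omega
    exact Finset.mem_image.2 ⟨k, Finset.mem_range.2 hk', rfl⟩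
  · intro hx
    obtain ⟨k, hk, rfl⟩ := Finset.mem_image.1 hx
    rw [Finset.mem_range] at hk
    refine Finset.mem_erase.2 ⟨(nth_lt A (by omega) (by omega)).ne, nth_mem A (by omega)⟩

lemma nth_erase_max {r : ℕ} {A : Finset ℕ} (hA2 : A.card = r) (hr : 1 ≤ r)
    {k : ℕ} (hk : k < r - 1) : nth (A.erase (nth A (r-1))) k = nth A k := by
  rw [erase_max_eq hA2 hr]
  exact nth_image (fun a b hab hb => nth_lt A hab (by omega)) hk

lemma insert_top_eq {t x : ℕ} {B : Finset ℕ} (hB2 : B.card = t) (hx : ∀ y ∈ B, y < x) :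
    insert x B = (Finset.range (t+1)).image (fun k => if k < t then nth B k else x) := by
  ext z
  constructor
  · intro hz
    rcases Finset.mem_insert.1 hz with rfl | hz
    · exact Finset.mem_image.2 ⟨t, Finset.mem_range.2 (by omega), by simp⟩
    · obtain ⟨k, hk, rfl⟩ := exists_nth hz
      exact Finset.mem_image.2 ⟨k, Finset.mem_range.2 (by omega), by simp [show k < t by omega]⟩
  · intro hz
    obtain ⟨k, hk, rfl⟩ := Finset.mem_image.1 hz
    rw [Finset.mem_range] at hk
    by_cases h : k < t
    · simp only [if_pos h]
      exact Finset.mem_insert_of_mem (nth_mem B (by omega))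
    · simp only [if_neg h]
      exact Finset.mem_insert_self x B

lemma insert_top_mono {t x : ℕ} {B : Finset ℕ} (hB2 : B.card = t) (hx : ∀ y ∈ B, y < x) :
    ∀ ⦃a b : ℕ⦄, a < b → b < t + 1 →
      (if a < t then nth B a else x) < (if b < t then nth B b else x) := by
  intro a b hab hb
  by_cases h : b < t
  · rw [if_pos (by omega), if_pos h]
    exact nth_lt B hab (by omega)
  · rw [if_pos (by omega : a < t), if_neg h]
    exact hx _ (nth_mem B (by omega))

lemma nth_insert_lt {t x : ℕ} {B : Finset ℕ} (hB2 : B.card = t) (hx : ∀ y ∈ B, y < x)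
    {k : ℕ} (hk : k < t) : nth (insert x B) k = nth B k := by
  rw [insert_top_eq hB2 hx, nth_image (insert_top_mono hB2 hx) (by omega), if_pos hk]

lemma nth_insert_last {t x : ℕ} {B : Finset ℕ} (hB2 : B.card = t) (hx : ∀ y ∈ B, y < x) :
    nth (insert x B) t = x := by
  rw [insert_top_eq hB2 hx, nth_image (insert_top_mono hB2 hx) (by omega), if_neg (by omega)]

lemma biased_iff {n m t : ℕ} (hm1 : 1 ≤ m) (hev : n % 2 = 0) {A : Finset ℕ}
    (hA1 : A ⊆ Finset.Icc 1 n) (hA2 : A.card = t) (ht : 1 ≤ t) :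
    LeftBiased n m A ↔ (m ≤ t ∧ nth A (m-1) + nth A (t-1) ≤ n) := by
  constructor
  · rintro ⟨u, hu, hcard, hdisj⟩
    have hmt : m ≤ t := by
      rw [← hcard, ← hA2]
      exact Finset.card_le_card Finset.inter_subset_left
    have h1 : nth A (m-1) ≤ u := by
      by_contra hgt
      push_neg at hgt
      have hsub : A ∩ Finset.Icc 1 u ⊆ (Finset.range (m-1)).image (nth A) := by
        intro x hx
        obtain ⟨hxA, hxI⟩ := Finset.mem_inter.1 hx
        rw [Finset.mem_Icc] at hxI
        obtain ⟨k, hk, rfl⟩ := exists_nth hxA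
        refine Finset.mem_image.2 ⟨k, Finset.mem_range.2 ?_, rfl⟩
        by_contra hk2
        have := nth_le A (show m-1 ≤ k by omega) hk
        omega
      have := Finset.card_le_card hsub
      have h2 := Finset.card_image_le (f := nth A) (s := Finset.range (m-1))
      rw [Finset.card_range] at h2
      omega
    have h2 : nth A (t-1) ≤ n - u := by
      have hmem := nth_mem A (show t-1 < A.card by omega)
      have hb := Finset.mem_Icc.1 (hA1 hmem)
      have : nth A (t-1) ∉ Finset.Icc (n+1-u) n := by
        intro hc
        have := Finset.eq_empty_iff_forall_notMem.1 hdisj (nth A (t-1))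
        exact this (Finset.mem_inter.2 ⟨hmem, hc⟩)
      rw [Finset.mem_Icc] at this
      omega
    exact ⟨hmt, by omega⟩
  · rintro ⟨hmt, hsum⟩
    have hmono : nth A (m-1) ≤ nth A (t-1) := nth_le A (by omega) (by omega)
    have hb1 : 1 ≤ nth A (m-1) := nth_one_le hA1 (by omega)
    refine ⟨nth A (m-1), by omega, ?_, ?_⟩
    · have : A ∩ Finset.Icc 1 (nth A (m-1)) = (Finset.range m).image (nth A) := by
        ext x
        constructor
        · intro hx
          obtain ⟨hxA, hxI⟩ := Finset.mem_inter.1 hx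
          rw [Finset.mem_Icc] at hxI
          obtain ⟨k, hk, rfl⟩ := exists_nth hxA
          refine Finset.mem_image.2 ⟨k, Finset.mem_range.2 ?_, rfl⟩
          by_contra hk2
          have := nth_lt A (show m-1 < k by omega) hk
          omega
        · intro hx
          obtain ⟨k, hk, rfl⟩ := Finset.mem_image.1 hx
          rw [Finset.mem_range] at hk
          refine Finset.mem_inter.2 ⟨nth_mem A (by omega), Finset.mem_Icc.2
            ⟨nth_one_le hA1 (by omega), nth_le A (by omega) (by omega)⟩⟩
      rw [this, Finset.card_image_of_injOn, Finset.card_range]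
      intro a ha b hb hab
      simp only [Finset.coe_range, Set.mem_Iio] at ha hb
      by_contra hne
      rcases Nat.lt_or_ge a b with h | h
      · exact absurd hab (nth_lt A h (by omega)).ne
      · exact absurd hab.symm (nth_lt A (lt_of_le_of_ne h (Ne.symm hne)) (by omega)).ne
    · rw [Finset.eq_empty_iff_forall_notMem]
      intro x hx
      obtain ⟨hxA, hxI⟩ := Finset.mem_inter.1 hx
      rw [Finset.mem_Icc] at hxI
      obtain ⟨k, hk, rfl⟩ := exists_nth hxA
      have := nth_le A (show k ≤ t-1 by omega) (by omega)
      omega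

lemma hcount_eq {n m t : ℕ} (hm1 : 1 ≤ m) (hev : n % 2 = 0) (ht : 1 ≤ t) :
    hcount n t m = (((Finset.Icc 1 n).powersetCard t).filter
      (fun A => m ≤ t ∧ nth A (m-1) + nth A (t-1) ≤ n)).card := by
  rw [hcount]
  congr 1
  apply Finset.filter_congr
  intro A hA
  obtain ⟨h1, h2⟩ := Finset.mem_powersetCard.1 hA
  exact biased_iff hm1 hev h1 h2 ht

lemma cardLF {n r m : ℕ} (hm1 : 1 ≤ m) (hmr : m ≤ r) (hr2 : 2 ≤ r) (hev : n % 2 = 0) :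
    (((Finset.Icc 1 n).powersetCard r).filter (CondL n r m)).card
      = hcount n r m + hcount n (r-1) m := by
  classical
  set P := (Finset.Icc 1 n).powersetCard r with hP
  have hsplit : ∀ A ∈ P, CondL n r m A ↔
      ((nth A (m-1) + nth A (r-1) ≤ n) ∨ (nth A (m-1) + nth A (r-1) = n+1)) := by
    intro A _
    rw [CondL]; omega
  have h1 : P.filter (CondL n r m) =
      P.filter (fun A => nth A (m-1) + nth A (r-1) ≤ n)
      ∪ P.filter (fun A => nth A (m-1) + nth A (r-1) = n+1) := by
    rw [← Finset.filter_or]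
    exact Finset.filter_congr (by intro A hA; exact hsplit A hA)
  have hdisj : Disjoint (P.filter (fun A => nth A (m-1) + nth A (r-1) ≤ n))
      (P.filter (fun A => nth A (m-1) + nth A (r-1) = n+1)) := by
    rw [Finset.disjoint_left]
    intro A h1 h2
    rw [Finset.mem_filter] at h1 h2
    omega
  rw [h1, Finset.card_union_of_disjoint hdisj]
  congr 1
  · rw [hcount_eq hm1 hev (by omega)]
    congr 1
    apply Finset.filter_congr
    intro A hA
    constructor
    · intro h; exact ⟨hmr, h⟩
    · intro h; exact h.2
  · -- boundary part ↔ biased (r-1)-sets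
    rw [hcount_eq hm1 hev (show 1 ≤ r - 1 by omega)]
    rcases Nat.lt_or_ge m r with hmlt | hmge
    · -- m < r : bijection
      apply Finset.card_nbij' (i := fun A => A.erase (nth A (r-1)))
        (j := fun B => insert (n+1 - nth B (m-1)) B)
      · intro A hA
        obtain ⟨hAP, hsum⟩ := Finset.mem_filter.1 hA
        obtain ⟨hA1, hA2⟩ := Finset.mem_powersetCard.1 hAP
        have hmm : nth A (r-2) < nth A (r-1) := nth_lt A (by omega) (by omega)
        have e1 : nth (A.erase (nth A (r-1))) (m-1) = nth A (m-1) :=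
          nth_erase_max hA2 (by omega) (by omega)
        have e2 : nth (A.erase (nth A (r-1))) (r-1-1) = nth A (r-2) := by
          rw [show r-1-1 = r-2 by omega]
          exact nth_erase_max hA2 (by omega) (by omega)
        refine Finset.mem_filter.2 ⟨Finset.mem_powersetCard.2
          ⟨(Finset.erase_subset _ _).trans hA1, ?_⟩, ?_, ?_⟩
        · rw [Finset.card_erase_of_mem (nth_mem A (by omega)), hA2]
        · omega
        · rw [e1, e2]; omega
      · intro B hB
        obtain ⟨hBP, hmB, hsumB⟩ := Finset.mem_filter.1 hB
        obtain ⟨hB1, hB2⟩ := Finset.mem_powersetCard.1 hBP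
        have hx : ∀ y ∈ B, y < n+1 - nth B (m-1) := by
          intro y hy
          obtain ⟨k, hk, rfl⟩ := exists_nth hy
          have h3 : nth B k ≤ nth B (r-1-1) := nth_le B (by omega) (by omega)
          have h4 : 1 ≤ nth B (m-1) := nth_one_le hB1 (by omega)
          omega
        have hb1 : 1 ≤ nth B (m-1) := nth_one_le hB1 (by omega)
        have hbn : nth B (m-1) ≤ n := nth_le_n hB1 (by omega)
        have hnotmem : n+1 - nth B (m-1) ∉ B := fun hc => absurd rfl (hx _ hc).ne'
        have e1 : nth (insert (n+1 - nth B (m-1)) B) (m-1) = nth B (m-1) :=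
          nth_insert_lt (t := r-1) hB2 hx (by omega)
        have e2 : nth (insert (n+1 - nth B (m-1)) B) (r-1) = n+1 - nth B (m-1) :=
          nth_insert_last (t := r-1) hB2 hx
        refine Finset.mem_filter.2 ⟨Finset.mem_powersetCard.2 ⟨?_, ?_⟩, ?_⟩
        · rw [Finset.insert_subset_iff]
          exact ⟨Finset.mem_Icc.2 (by omega), hB1⟩
        · rw [Finset.card_insert_of_notMem hnotmem, hB2]; omega
        · rw [e1, e2]; omega
      · intro A hA
        obtain ⟨hAP, hsum⟩ := Finset.mem_filter.1 hA
        obtain ⟨hA1, hA2⟩ := Finset.mem_powersetCard.1 hAP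
        have e1 : nth (A.erase (nth A (r-1))) (m-1) = nth A (m-1) :=
          nth_erase_max hA2 (by omega) (by omega)
        have hxx : n+1 - nth (A.erase (nth A (r-1))) (m-1) = nth A (r-1) := by
          rw [e1]; omega
        dsimp only
        rw [hxx]
        exact Finset.insert_erase (nth_mem A (by omega))
      · intro B hB
        obtain ⟨hBP, hmB, hsumB⟩ := Finset.mem_filter.1 hB
        obtain ⟨hB1, hB2⟩ := Finset.mem_powersetCard.1 hBP
        have hx : ∀ y ∈ B, y < n+1 - nth B (m-1) := by
          intro y hy
          obtain ⟨k, hk, rfl⟩ := exists_nth hy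
          have h3 : nth B k ≤ nth B (r-1-1) := nth_le B (by omega) (by omega)
          have h4 : 1 ≤ nth B (m-1) := nth_one_le hB1 (by omega)
          omega
        have hnotmem : n+1 - nth B (m-1) ∉ B := fun hc => absurd rfl (hx _ hc).ne'
        have e2 : nth (insert (n+1 - nth B (m-1)) B) (r-1) = n+1 - nth B (m-1) :=
          nth_insert_last (t := r-1) hB2 hx
        dsimp only
        rw [e2]
        exact Finset.erase_insert hnotmem
    · -- m = r : both sides are 0
      have hmr' : m = r := by omega
      have hz1 : P.filter (fun A => nth A (m-1) + nth A (r-1) = n+1) = ∅ := by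
        rw [Finset.eq_empty_iff_forall_notMem]
        intro A hA
        rw [Finset.mem_filter, hmr'] at hA
        omega
      have hz2 : ((Finset.Icc 1 n).powersetCard (r-1)).filter
          (fun B => m ≤ r-1 ∧ nth B (m-1) + nth B (r-1-1) ≤ n) = ∅ := by
        rw [Finset.eq_empty_iff_forall_notMem]
        intro B hB
        rw [Finset.mem_filter] at hB
        omega
      rw [hz1, hz2]

lemma refl_eq {n t : ℕ} {A : Finset ℕ} (hA2 : A.card = t) :
    A.image (fun x => n+1-x) = (Finset.range t).image (fun k => n+1 - nth A (t-1-k)) := by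
  ext x
  constructor
  · intro hx
    obtain ⟨y, hy, rfl⟩ := Finset.mem_image.1 hx
    obtain ⟨k, hk, rfl⟩ := exists_nth hy
    refine Finset.mem_image.2 ⟨t-1-k, Finset.mem_range.2 (by omega), ?_⟩
    rw [show t-1-(t-1-k) = k by omega]
  · intro hx
    obtain ⟨k, hk, rfl⟩ := Finset.mem_image.1 hx
    rw [Finset.mem_range] at hk
    exact Finset.mem_image.2 ⟨nth A (t-1-k), nth_mem A (by omega), rfl⟩

lemma nth_refl {n t : ℕ} {A : Finset ℕ} (hA1 : A ⊆ Finset.Icc 1 n) (hA2 : A.card = t)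
    {k : ℕ} (hk : k < t) : nth (A.image (fun x => n+1-x)) k = n+1 - nth A (t-1-k) := by
  rw [refl_eq hA2]
  apply nth_image _ hk
  intro a b hab hb
  have h1 : nth A (t-1-b) < nth A (t-1-a) := nth_lt A (by omega) (by omega)
  have h2 : nth A (t-1-a) ≤ n := nth_le_n hA1 (by omega)
  omega

lemma cardRF {n r m : ℕ} (hm1 : 1 ≤ m) (hmr : m ≤ r) (hr2 : 2 ≤ r) (hev : n % 2 = 0) :
    (((Finset.Icc 1 n).powersetCard r).filter (CondR n r m)).card = hcount n r m := by
  classical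
  rw [hcount_eq hm1 hev (show 1 ≤ r by omega)]
  have key : ∀ A : Finset ℕ, A ∈ (Finset.Icc 1 n).powersetCard r →
      (A.image (fun x => n+1-x)) ∈ (Finset.Icc 1 n).powersetCard r ∧
      (∀ k < r, nth (A.image (fun x => n+1-x)) k = n+1 - nth A (r-1-k)) ∧
      (A.image (fun x => n+1-x)).image (fun x => n+1-x) = A := by
    intro A hA
    obtain ⟨hA1, hA2⟩ := Finset.mem_powersetCard.1 hA
    refine ⟨Finset.mem_powersetCard.2 ⟨?_, ?_⟩, fun k hk => nth_refl hA1 hA2 hk, ?_⟩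
    · intro x hx
      obtain ⟨y, hy, rfl⟩ := Finset.mem_image.1 hx
      have := Finset.mem_Icc.1 (hA1 hy)
      exact Finset.mem_Icc.2 (by omega)
    · rw [Finset.card_image_of_injOn, hA2]
      intro x hx y hy hxy
      have hxy' : n+1-x = n+1-y := hxy
      have h1 := Finset.mem_Icc.1 (hA1 hx)
      have h2 := Finset.mem_Icc.1 (hA1 hy)
      omega
    · rw [Finset.image_image]
      have : ∀ x ∈ A, ((fun x => n+1-x) ∘ (fun x => n+1-x)) x = id x := by
        intro x hx
        have := Finset.mem_Icc.1 (hA1 hx)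
        simp only [Function.comp_apply, id_eq]
        omega
      rw [Finset.image_congr this, Finset.image_id]
  apply Finset.card_nbij' (i := fun A => A.image (fun x => n+1-x))
    (j := fun A => A.image (fun x => n+1-x))
  · intro A hA
    obtain ⟨hAP, hcond⟩ := Finset.mem_filter.1 hA
    obtain ⟨hA1, hA2⟩ := Finset.mem_powersetCard.1 hAP
    obtain ⟨hmem, hnth, _⟩ := key A hAP
    refine Finset.mem_filter.2 ⟨hmem, hmr, ?_⟩
    rw [hnth (m-1) (by omega), hnth (r-1) (by omega),
      show r-1-(m-1) = r-m by omega, show r-1-(r-1) = 0 by omega]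
    rw [CondR] at hcond
    have b1 : 1 ≤ nth A 0 := nth_one_le hA1 (by omega)
    have b2 : nth A (r-m) ≤ n := nth_le_n hA1 (by omega)
    have b3 : nth A 0 ≤ n := nth_le_n hA1 (by omega)
    have b4 : 1 ≤ nth A (r-m) := nth_one_le hA1 (by omega)
    omega
  · intro B hB
    obtain ⟨hBP, hmB, hsum⟩ := Finset.mem_filter.1 hB
    obtain ⟨hB1, hB2⟩ := Finset.mem_powersetCard.1 hBP
    obtain ⟨hmem, hnth, _⟩ := key B hBP
    refine Finset.mem_filter.2 ⟨hmem, ?_⟩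
    rw [CondR, hnth 0 (by omega), hnth (r-m) (by omega),
      show r-1-0 = r-1 by omega, show r-1-(r-m) = m-1 by omega]
    have b1 : 1 ≤ nth B (m-1) := nth_one_le hB1 (by omega)
    have b2 : nth B (r-1) ≤ n := nth_le_n hB1 (by omega)
    have b3 : nth B (m-1) ≤ n := nth_le_n hB1 (by omega)
    have b4 : 1 ≤ nth B (r-1) := nth_one_le hB1 (by omega)
    omega
  · intro A hA
    exact (key A (Finset.mem_filter.1 hA).1).2.2
  · intro B hB
    exact (key B (Finset.mem_filter.1 hB).1).2.2

end
noncomputable section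
open Finset

lemma loose_sub_path {r s : ℕ} (hr : 1 ≤ r) (hrs : r ≤ s) :
    loosePathEdges r s ⊆ pathEdges r s := by
  intro e he
  rw [loosePathEdges] at he
  rw [pathEdges]
  rcases Finset.mem_insert.1 he with rfl | he
  · refine Finset.mem_image.2 ⟨1, Finset.mem_Icc.2 ⟨le_refl 1, by omega⟩, ?_⟩
    congr 1
    omega
  · rw [Finset.mem_singleton] at he
    subst he
    refine Finset.mem_image.2 ⟨s - r + 1, Finset.mem_Icc.2 ⟨by omega, le_refl _⟩, ?_⟩
    congr 1
    omega

theorem lower_main {n r s m : ℕ} (hev : n % 2 = 0) (hr2 : 2 ≤ r) (hm1 : 1 ≤ m)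
    (hmr : m ≤ r) (hs : s = r + m - 1) :
    ∃ Gs, Gs ⊆ (Finset.Icc 1 n).powersetCard r ∧
      (∀ C, IsCopy n s (loosePathEdges r s) C → ¬ C ⊆ Gs) ∧
      Gs.card + (((((Finset.Icc 1 n).powersetCard r)).filter (CondL n r m)).card
        + (((Finset.Icc 1 n).powersetCard r).filter (CondR n r m)).card) = n.choose r := by
  classical
  set P := (Finset.Icc 1 n).powersetCard r with hP
  have hPcard : P.card = n.choose r := by
    rw [hP, Finset.card_powersetCard, Nat.card_Icc]; simp
  refine ⟨P.filter (fun A => ¬ CondL n r m A ∧ ¬ CondR n r m A), Finset.filter_subset _ _,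
    ?_, ?_⟩
  · -- LP-freeness
    rintro C ⟨f, hf1, hf2, rfl⟩ hsub
    have hmono' : ∀ v v', 1 ≤ v → v < v' → v' ≤ s → f v < f v' := by
      intro v v' h1 h2 h3
      apply hf1
      · rw [Finset.coe_Icc, Set.mem_Icc]; omega
      · rw [Finset.coe_Icc, Set.mem_Icc]; omega
      · omega
    have hE1mem : (Finset.Icc 1 r).image f ∈
        (loosePathEdges r s).image (fun e => e.image f) :=
      Finset.mem_image_of_mem _ (by rw [loosePathEdges]; exact Finset.mem_insert_self _ _)
    have hE2mem : (Finset.Icc (s - r + 1) s).image f ∈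
        (loosePathEdges r s).image (fun e => e.image f) :=
      Finset.mem_image_of_mem _ (by
        rw [loosePathEdges]
        exact Finset.mem_insert_of_mem (Finset.mem_singleton_self _))
    have hE1 : (Finset.Icc 1 r).image f = (Finset.range r).image (fun k => f (1 + k)) := by
      rw [show Finset.Icc 1 r = Finset.Icc 1 (1 + r - 1) from by congr 1; omega]
      exact image_Icc_window f 1 r (by omega)
    have hE2 : (Finset.Icc (s - r + 1) s).image f
        = (Finset.range r).image (fun k => f (m + k)) := by
      rw [show Finset.Icc (s - r + 1) s = Finset.Icc m (m + r - 1) from by congr 1 <;> omega]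
      exact image_Icc_window f m r (by omega)
    have h1 := Finset.mem_filter.1 (hsub hE1mem)
    have h2 := Finset.mem_filter.1 (hsub hE2mem)
    have hnL : ¬ CondL n r m ((Finset.Icc 1 r).image f) := h1.2.1
    have hnR : ¬ CondR n r m ((Finset.Icc (s - r + 1) s).image f) := h2.2.2
    rw [CondL] at hnL
    rw [CondR] at hnR
    have u1 : nth ((Finset.Icc 1 r).image f) (m-1) = f (1 + (m-1)) := by
      rw [hE1]; exact nth_window (n := n) (s := s) hmono' (by omega) (by omega) (by omega) (by omega)
    have u2 : nth ((Finset.Icc 1 r).image f) (r-1) = f (1 + (r-1)) := by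
      rw [hE1]; exact nth_window (n := n) (s := s) hmono' (by omega) (by omega) (by omega) (by omega)
    have u3 : nth ((Finset.Icc (s - r + 1) s).image f) 0 = f (m + 0) := by
      rw [hE2]; exact nth_window (n := n) (s := s) hmono' (by omega) (by omega) (by omega) (by omega)
    have u4 : nth ((Finset.Icc (s - r + 1) s).image f) (r-m) = f (m + (r-m)) := by
      rw [hE2]; exact nth_window (n := n) (s := s) hmono' (by omega) (by omega) (by omega) (by omega)
    rw [u1, u2] at hnL
    rw [u3, u4] at hnR
    rw [show 1 + (m-1) = m by omega, show 1 + (r-1) = r by omega] at hnL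
    rw [show m + 0 = m by omega, show m + (r-m) = r by omega] at hnR
    omega
  · -- cardinality
    have c1 := Finset.card_filter_add_card_filter_not
      (s := P) (p := fun A => CondL n r m A ∨ CondR n r m A)
    have c2 : P.filter (fun A => CondL n r m A ∨ CondR n r m A)
        = P.filter (CondL n r m) ∪ P.filter (CondR n r m) := Finset.filter_or _ _ _
    have hdisj : Disjoint (P.filter (CondL n r m)) (P.filter (CondR n r m)) := by
      rw [Finset.disjoint_left]
      intro A h1 h2
      rw [Finset.mem_filter] at h1 h2
      obtain ⟨ha1, ha2⟩ := Finset.mem_powersetCard.1 h1.1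
      exact condLR_false hm1 hmr ha1 ha2 h1.2 h2.2
    have c3 : P.filter (fun A => ¬ (CondL n r m A ∨ CondR n r m A))
        = P.filter (fun A => ¬ CondL n r m A ∧ ¬ CondR n r m A) := by
      apply Finset.filter_congr
      intro A _
      exact not_or
    rw [c2, Finset.card_union_of_disjoint hdisj, c3] at c1
    omega

end

/-- For even `n > 0`, `2 ≤ r ≤ s ≤ 2r-1` and `m = s-r+1`,
`ex(n, LP^{(r)}_s) = ex(n, P^{(r)}_s) = C(n,r) - 2·h(n,r,m) - h(n,r-1,m)`. -/
theorem stmt3 (n r s m : ℕ) (hn : 0 < n) (hev : Even n)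
    (hr : 2 ≤ r) (hrs : r ≤ s) (hs : s ≤ 2 * r - 1) (hm : m = s - r + 1) :
    exNum n r s (loosePathEdges r s) = exNum n r s (pathEdges r s) ∧
    exNum n r s (pathEdges r s) = n.choose r - 2 * hcount n r m - hcount n (r - 1) m := by
  classical
  have hm1 : 1 ≤ m := by omega
  have hmr : m ≤ r := by omega
  have hseq : s = r + m - 1 := by omega
  have hev' : n % 2 = 0 := Nat.even_iff.1 hev
  have hPcard : ((Finset.Icc 1 n).powersetCard r).card = n.choose r := by
    rw [Finset.card_powersetCard, Nat.card_Icc]; simp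
  set K := n.choose r - 2 * hcount n r m - hcount n (r - 1) m with hK
  -- empty set is always admissible
  have hpathne : (Finset.Icc 1 r : Finset ℕ) ∈ pathEdges r s := by
    rw [pathEdges]
    refine Finset.mem_image.2 ⟨1, Finset.mem_Icc.2 ⟨le_refl 1, by omega⟩, ?_⟩
    congr 1; omega
  have hloosene : (Finset.Icc 1 r : Finset ℕ) ∈ loosePathEdges r s := by
    rw [loosePathEdges]; exact Finset.mem_insert_self _ _
  have h0LP : (0:ℕ) ∈ {t | ∃ G ⊆ (Finset.Icc 1 n).powersetCard r,
      (∀ C, IsCopy n s (loosePathEdges r s) C → ¬ C ⊆ G) ∧ G.card = t} := by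
    refine ⟨∅, Finset.empty_subset _, ?_, Finset.card_empty⟩
    rintro C ⟨f, hf1, hf2, rfl⟩ hsub
    exact Finset.notMem_empty _ (hsub (Finset.mem_image_of_mem _ hloosene))
  have h0P : (0:ℕ) ∈ {t | ∃ G ⊆ (Finset.Icc 1 n).powersetCard r,
      (∀ C, IsCopy n s (pathEdges r s) C → ¬ C ⊆ G) ∧ G.card = t} := by
    refine ⟨∅, Finset.empty_subset _, ?_, Finset.card_empty⟩
    rintro C ⟨f, hf1, hf2, rfl⟩ hsub
    exact Finset.notMem_empty _ (hsub (Finset.mem_image_of_mem _ hpathne))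
  have hub : ∀ t ∈ {t | ∃ G ⊆ (Finset.Icc 1 n).powersetCard r,
      (∀ C, IsCopy n s (pathEdges r s) C → ¬ C ⊆ G) ∧ G.card = t}, t ≤ K := by
    rintro t ⟨G, hG, hfree, rfl⟩
    have h := upper_main hr hm1 hmr hseq hG hfree
    rw [cardLF hm1 hmr hr hev', cardRF hm1 hmr hr hev'] at h
    omega
  have hbddP : BddAbove {t | ∃ G ⊆ (Finset.Icc 1 n).powersetCard r,
      (∀ C, IsCopy n s (pathEdges r s) C → ¬ C ⊆ G) ∧ G.card = t} := by
    refine ⟨n.choose r, ?_⟩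
    rintro t ⟨G, hG, _, rfl⟩
    have := Finset.card_le_card hG
    omega
  have hbddLP : BddAbove {t | ∃ G ⊆ (Finset.Icc 1 n).powersetCard r,
      (∀ C, IsCopy n s (loosePathEdges r s) C → ¬ C ⊆ G) ∧ G.card = t} := by
    refine ⟨n.choose r, ?_⟩
    rintro t ⟨G, hG, _, rfl⟩
    have := Finset.card_le_card hG
    omega
  have hsubset : {t | ∃ G ⊆ (Finset.Icc 1 n).powersetCard r,
        (∀ C, IsCopy n s (loosePathEdges r s) C → ¬ C ⊆ G) ∧ G.card = t}
      ⊆ {t | ∃ G ⊆ (Finset.Icc 1 n).powersetCard r,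
        (∀ C, IsCopy n s (pathEdges r s) C → ¬ C ⊆ G) ∧ G.card = t} := by
    rintro t ⟨G, hG, hfree, rfl⟩
    refine ⟨G, hG, ?_, rfl⟩
    rintro C ⟨f, hf1, hf2, rfl⟩ hCG
    refine hfree ((loosePathEdges r s).image (fun e => e.image f)) ⟨f, hf1, hf2, rfl⟩ ?_
    exact (Finset.image_subset_image (loose_sub_path (by omega) hrs)).trans hCG
  have hKmem : K ∈ {t | ∃ G ⊆ (Finset.Icc 1 n).powersetCard r,
      (∀ C, IsCopy n s (loosePathEdges r s) C → ¬ C ⊆ G) ∧ G.card = t} := by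
    obtain ⟨Gs, hGs, hfreeGs, hcardGs⟩ := lower_main hev' hr hm1 hmr hseq
    rw [cardLF hm1 hmr hr hev', cardRF hm1 hmr hr hev'] at hcardGs
    refine ⟨Gs, hGs, hfreeGs, ?_⟩
    omega
  have e1 : exNum n r s (loosePathEdges r s) ≤ exNum n r s (pathEdges r s) := by
    rw [exNum, exNum]
    exact csSup_le_csSup hbddP ⟨0, h0LP⟩ hsubset
  have e2 : exNum n r s (pathEdges r s) ≤ K := by
    rw [exNum]
    exact csSup_le ⟨0, h0P⟩ hub
  have e3 : K ≤ exNum n r s (loosePathEdges r s) := by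
    rw [exNum]
    exact le_csSup hbddLP hKmem
  exact ⟨le_antisymm e1 (e2.trans e3), le_antisymm e2 (e3.trans e1)⟩
end

section
/- Fix integers r and m with 1 ≤ m ≤ r. There exists a constant C > 0 such that for every even integer n ≥ 2r, |h(n,r,m) − C(n,r)/2^m| ≤ C·n^{r−1}, where C(n,r) is the binomial coefficient. -/
open Finset
open scoped Classical

namespace Stmt4Aux

def Pairfree (q : ℕ) (S : Finset ℕ) : Prop := ∀ x ∈ S, (2*q+1-x) ∉ S

def encS (q : ℕ) (T U : Finset ℕ) : Finset ℕ :=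
  (T \ U).image (fun d => q + 1 - d) ∪ U.image (fun d => q + d)

variable {q r m u v : ℕ} {S T U : Finset ℕ}



lemma injOn_lower {q : ℕ} {A : Finset ℕ} (hA : A ⊆ Icc 1 q) :
    Set.InjOn (fun d => q + 1 - d) ↑A := by
  intro a ha b hb h
  have ha' := mem_Icc.mp (hA ha); have hb' := mem_Icc.mp (hA hb)
  simp only at h; omega

lemma injOn_upper {q : ℕ} {A : Finset ℕ} : Set.InjOn (fun d => q + d) ↑A := by
  intro a _ b _ h; simpa using h

lemma filter_le_encS {q : ℕ} {T U : Finset ℕ} (hT : T ⊆ Icc 1 q) (hU : U ⊆ T) :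
    (encS q T U).filter (fun x => x ≤ q) = (T \ U).image (fun d => q + 1 - d) := by
  ext x
  simp only [encS, mem_filter, mem_union, mem_image]
  constructor
  · rintro ⟨h | h, hx⟩
    · exact h
    · obtain ⟨d, hd, rfl⟩ := h
      have := mem_Icc.mp (hT (hU hd)); omega
  · rintro ⟨d, hd, rfl⟩
    have := mem_Icc.mp (hT (sdiff_subset hd))
    exact ⟨Or.inl ⟨d, hd, rfl⟩, by omega⟩

lemma filter_gt_encS {q : ℕ} {T U : Finset ℕ} (hT : T ⊆ Icc 1 q) (hU : U ⊆ T) :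
    (encS q T U).filter (fun x => ¬ x ≤ q) = U.image (fun d => q + d) := by
  ext x
  simp only [encS, mem_filter, mem_union, mem_image]
  constructor
  · rintro ⟨h | h, hx⟩
    · obtain ⟨d, hd, rfl⟩ := h
      have := mem_Icc.mp (hT (sdiff_subset hd)); omega
    · exact h
  · rintro ⟨d, hd, rfl⟩
    have := mem_Icc.mp (hT (hU hd))
    exact ⟨Or.inr ⟨d, hd, rfl⟩, by omega⟩

lemma encS_card {q : ℕ} {T U : Finset ℕ} (hT : T ⊆ Icc 1 q) (hU : U ⊆ T) :
    (encS q T U).card = T.card := by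
  have h1 := card_filter_add_card_filter_not (s := encS q T U) (fun x => x ≤ q)
  rw [filter_le_encS hT hU, filter_gt_encS hT hU,
    card_image_of_injOn (injOn_lower (fun x hx => hT (sdiff_subset hx))),
    card_image_of_injOn injOn_upper, card_sdiff_add_card_eq_card hU] at h1
  exact h1.symm

lemma encS_subset {q : ℕ} {T U : Finset ℕ} (hT : T ⊆ Icc 1 q) (hU : U ⊆ T) :
    encS q T U ⊆ Icc 1 (2*q) := by
  intro x hx
  simp only [encS, mem_union, mem_image] at hx
  rcases hx with ⟨d, hd, rfl⟩ | ⟨d, hd, rfl⟩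
  · have := mem_Icc.mp (hT (sdiff_subset hd)); simp only [mem_Icc]; omega
  · have := mem_Icc.mp (hT (hU hd)); simp only [mem_Icc]; omega

lemma encS_pairfree {q : ℕ} {T U : Finset ℕ} (hT : T ⊆ Icc 1 q) (hU : U ⊆ T) :
    Pairfree q (encS q T U) := by
  intro x hx hx'
  simp only [encS, mem_union, mem_image] at hx hx'
  rcases hx with ⟨d, hd, rfl⟩ | ⟨d, hd, rfl⟩
  · have hd' := mem_Icc.mp (hT (sdiff_subset hd))
    rcases hx' with ⟨e, he, heq⟩ | ⟨e, he, heq⟩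
    · have := mem_Icc.mp (hT (sdiff_subset he)); omega
    · have := mem_Icc.mp (hT (hU he))
      have : e = d := by omega
      subst this
      exact (mem_sdiff.mp hd).2 he
  · have hd' := mem_Icc.mp (hT (hU hd))
    rcases hx' with ⟨e, he, heq⟩ | ⟨e, he, heq⟩
    · have := mem_Icc.mp (hT (sdiff_subset he))
      have : e = d := by omega
      subst this
      exact (mem_sdiff.mp he).2 hd
    · have := mem_Icc.mp (hT (hU he)); omega


noncomputable def decU (q : ℕ) (S : Finset ℕ) : Finset ℕ :=
  (S.filter (fun x => ¬ x ≤ q)).image (fun x => x - q)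

noncomputable def decT (q : ℕ) (S : Finset ℕ) : Finset ℕ :=
  (S.filter (fun x => x ≤ q)).image (fun x => q + 1 - x) ∪ decU q S


lemma decT_subset (hS : S ⊆ Icc 1 (2*q)) : decT q S ⊆ Icc 1 q := by
  intro d hd
  simp only [decT, decU, mem_union, mem_image, mem_filter] at hd
  rcases hd with ⟨x, ⟨hx, hx'⟩, rfl⟩ | ⟨x, ⟨hx, hx'⟩, rfl⟩ <;>
    · have := mem_Icc.mp (hS hx); simp only [mem_Icc]; omega

lemma decU_subset_decT : decU q S ⊆ decT q S := subset_union_right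

-- the two images in decT are disjoint, given Pairfree
lemma decT_parts_disjoint (hS : S ⊆ Icc 1 (2*q)) (hPF : Pairfree q S) :
    Disjoint ((S.filter (fun x => x ≤ q)).image (fun x => q + 1 - x)) (decU q S) := by
  rw [disjoint_left]
  rintro d hd hd'
  simp only [decU, mem_image, mem_filter] at hd hd'
  obtain ⟨x, ⟨hx, hxq⟩, rfl⟩ := hd
  obtain ⟨y, ⟨hy, hyq⟩, hxy⟩ := hd'
  have hx' := mem_Icc.mp (hS hx)
  have hy' := mem_Icc.mp (hS hy)
  have : y = 2*q+1-x := by omega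
  subst this
  exact hPF x hx hy

lemma decT_card (hS : S ⊆ Icc 1 (2*q)) (hPF : Pairfree q S) :
    (decT q S).card = S.card := by
  rw [decT, card_union_of_disjoint (decT_parts_disjoint hS hPF), decU,
    card_image_of_injOn, card_image_of_injOn,
    card_filter_add_card_filter_not (fun x => x ≤ q)]
  · intro a ha b hb h
    simp only [coe_filter, Set.mem_setOf_eq] at ha hb
    have := mem_Icc.mp (hS ha.1); have := mem_Icc.mp (hS hb.1)
    simp only at h; omega
  · intro a ha b hb h
    simp only [coe_filter, Set.mem_setOf_eq] at ha hb
    have := mem_Icc.mp (hS ha.1); have := mem_Icc.mp (hS hb.1)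
    simp only at h; omega

lemma dec_enc (hT : T ⊆ Icc 1 q) (hU : U ⊆ T) :
    decT q (encS q T U) = T ∧ decU q (encS q T U) = U := by
  have hfle : (encS q T U).filter (fun x => x ≤ q) = (T \ U).image (fun d => q + 1 - d) := by
    ext x
    simp only [encS, mem_filter, mem_union, mem_image]
    constructor
    · rintro ⟨h | h, hx⟩
      · exact h
      · obtain ⟨d, hd, rfl⟩ := h
        have := mem_Icc.mp (hT (hU hd)); omega
    · rintro ⟨d, hd, rfl⟩
      have := mem_Icc.mp (hT (sdiff_subset hd))
      exact ⟨Or.inl ⟨d, hd, rfl⟩, by omega⟩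
  have hfgt : (encS q T U).filter (fun x => ¬ x ≤ q) = U.image (fun d => q + d) := by
    ext x
    simp only [encS, mem_filter, mem_union, mem_image]
    constructor
    · rintro ⟨h | h, hx⟩
      · obtain ⟨d, hd, rfl⟩ := h
        have := mem_Icc.mp (hT (sdiff_subset hd)); omega
      · exact h
    · rintro ⟨d, hd, rfl⟩
      have := mem_Icc.mp (hT (hU hd))
      exact ⟨Or.inr ⟨d, hd, rfl⟩, by omega⟩
  have hU' : decU q (encS q T U) = U := by
    rw [decU, hfgt, image_image]
    refine Eq.trans (image_congr ?_) image_id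
    intro d hd; simp only [Function.comp, id_eq]; omega
  refine ⟨?_, hU'⟩
  rw [decT, hU', hfle, image_image]
  have : ((T \ U).image ((fun x => q + 1 - x) ∘ fun d => q + 1 - d)) = T \ U := by
    refine Eq.trans (image_congr ?_) image_id
    intro d hd
    have := mem_Icc.mp (hT (sdiff_subset hd))
    simp only [Function.comp, id_eq]; omega
  rw [this, sdiff_union_of_subset hU]

lemma enc_dec (hS : S ⊆ Icc 1 (2*q)) (hPF : Pairfree q S) :
    encS q (decT q S) (decU q S) = S := by
  have hdisj := decT_parts_disjoint hS hPF
  have hsd : decT q S \ decU q S = (S.filter (fun x => x ≤ q)).image (fun x => q + 1 - x) := by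
    rw [decT, union_sdiff_right]
    exact sdiff_eq_self_of_disjoint hdisj
  rw [encS, hsd, decU, image_image, image_image]
  have h1 : ((S.filter (fun x => x ≤ q)).image ((fun d => q + 1 - d) ∘ fun x => q + 1 - x))
      = S.filter (fun x => x ≤ q) := by
    refine Eq.trans (image_congr ?_) image_id
    intro x hx
    have hx' := mem_filter.mp hx
    have := mem_Icc.mp (hS hx'.1)
    simp only [Function.comp, id_eq]; omega
  have h2 : ((S.filter (fun x => ¬ x ≤ q)).image ((fun d => q + d) ∘ fun x => x - q))
      = S.filter (fun x => ¬ x ≤ q) := by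
    refine Eq.trans (image_congr ?_) image_id
    intro x hx
    have hx' := mem_filter.mp hx
    have := mem_Icc.mp (hS hx'.1)
    simp only [Function.comp, id_eq]; omega
  rw [h1, h2, filter_union_filter_not_eq]


lemma exists_thr (m : ℕ) (T : Finset ℕ) (hm : m ≤ T.card) :
    ∃ v, (T.filter (fun d => v ≤ d)).card = m := by
  induction m with
  | zero =>
    refine ⟨T.sup id + 1, ?_⟩
    rw [card_eq_zero, filter_eq_empty_iff]
    intro d hd
    have := Finset.le_sup (f := id) hd
    simp only [id_eq] at this
    omega
  | succ m ih =>
    obtain ⟨v, hv⟩ := ih (le_of_lt hm)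
    have hW : (T.filter (fun d => ¬ v ≤ d)).Nonempty := by
      rw [← card_pos]
      have := card_filter_add_card_filter_not (s := T) (fun d => v ≤ d)
      omega
    set a := (T.filter (fun d => ¬ v ≤ d)).max' hW with ha
    have haT : a ∈ T.filter (fun d => ¬ v ≤ d) := Finset.max'_mem _ hW
    have haT' := mem_filter.mp haT
    refine ⟨a, ?_⟩
    have heq : T.filter (fun d => a ≤ d) = insert a (T.filter (fun d => v ≤ d)) := by
      ext x
      simp only [mem_filter, mem_insert]
      constructor
      · rintro ⟨hx, hax⟩
        by_cases hxv : v ≤ x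
        · exact Or.inr ⟨hx, hxv⟩
        · have : x ≤ a := Finset.le_max' _ _ (mem_filter.mpr ⟨hx, hxv⟩)
          exact Or.inl (by omega)
      · rintro (rfl | ⟨hx, hvx⟩)
        · exact ⟨haT'.1, le_refl _⟩
        · exact ⟨hx, by omega⟩
    rw [heq, card_insert_of_notMem, hv]
    simp only [mem_filter]
    tauto

noncomputable def thr (m : ℕ) (T : Finset ℕ) : ℕ :=
  if h : ∃ v, (T.filter (fun d => v ≤ d)).card = m then h.choose else 0

noncomputable def topm (m : ℕ) (T : Finset ℕ) : Finset ℕ := T.filter (fun d => thr m T ≤ d)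

lemma topm_card {m : ℕ} {T : Finset ℕ} (hm : m ≤ T.card) : (topm m T).card = m := by
  have h : ∃ v, (T.filter (fun d => v ≤ d)).card = m := exists_thr m T hm
  rw [topm, thr, dif_pos h]
  exact h.choose_spec

lemma topm_subset {m : ℕ} {T : Finset ℕ} : topm m T ⊆ T := filter_subset _ _

-- two up-filters with equal cards are equal
lemma filter_eq_topm {m v : ℕ} {T : Finset ℕ}
    (hc : (T.filter (fun d => v ≤ d)).card = m) (hm : m ≤ T.card) :
    T.filter (fun d => v ≤ d) = topm m T := by
  have h2 : (topm m T).card = m := topm_card hm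
  rcases le_total v (thr m T) with h | h
  · symm
    apply eq_of_subset_of_card_le
    · intro x hx
      rw [topm, mem_filter] at hx
      exact mem_filter.mpr ⟨hx.1, le_trans h hx.2⟩
    · rw [hc, h2]
  · apply eq_of_subset_of_card_le
    · intro x hx
      rw [mem_filter] at hx
      rw [topm, mem_filter]
      exact ⟨hx.1, le_trans h hx.2⟩
    · rw [hc, h2]


lemma inter_low (hT : T ⊆ Icc 1 q) (hU : U ⊆ T) (hu : u ≤ q) :
    encS q T U ∩ Icc 1 u
      = ((T \ U).filter (fun d => q + 1 - u ≤ d)).image (fun d => q + 1 - d) := by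
  ext x
  simp only [mem_inter, mem_Icc, encS, mem_union, mem_image, mem_filter]
  constructor
  · rintro ⟨h | h, h1, h2⟩
    · obtain ⟨d, hd, rfl⟩ := h
      have := mem_Icc.mp (hT (sdiff_subset hd))
      exact ⟨d, ⟨hd, by omega⟩, rfl⟩
    · obtain ⟨d, hd, rfl⟩ := h
      have := mem_Icc.mp (hT (hU hd)); omega
  · rintro ⟨d, ⟨hd, hdu⟩, rfl⟩
    have := mem_Icc.mp (hT (sdiff_subset hd))
    exact ⟨Or.inl ⟨d, hd, rfl⟩, by omega, by omega⟩

lemma inter_high (hT : T ⊆ Icc 1 q) (hU : U ⊆ T) (hu : u ≤ q) :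
    encS q T U ∩ Icc (2*q + 1 - u) (2*q)
      = (U.filter (fun d => q + 1 - u ≤ d)).image (fun d => q + d) := by
  ext x
  simp only [mem_inter, mem_Icc, encS, mem_union, mem_image, mem_filter]
  constructor
  · rintro ⟨h | h, h1, h2⟩
    · obtain ⟨d, hd, rfl⟩ := h
      have := mem_Icc.mp (hT (sdiff_subset hd)); omega
    · obtain ⟨d, hd, rfl⟩ := h
      have := mem_Icc.mp (hT (hU hd))
      exact ⟨d, ⟨hd, by omega⟩, rfl⟩
  · rintro ⟨d, ⟨hd, hdu⟩, rfl⟩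
    have := mem_Icc.mp (hT (hU hd))
    exact ⟨Or.inr ⟨d, hd, rfl⟩, by omega, by omega⟩

lemma leftBiased_encS_iff (hm : 1 ≤ m) (hT : T ⊆ Icc 1 q) (hU : U ⊆ T) :
    LeftBiased (2*q) m (encS q T U)
      ↔ ∃ v, (T.filter (fun d => v ≤ d)).card = m ∧ U.filter (fun d => v ≤ d) = ∅ := by
  have hq2 : (2*q)/2 = q := by omega
  constructor
  · rintro ⟨u, hu, hcard, hempty⟩
    rw [hq2] at hu
    refine ⟨q + 1 - u, ?_, ?_⟩
    · rw [inter_low hT hU hu] at hcard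
      rw [card_image_of_injOn] at hcard
      · have hUe : U.filter (fun d => q + 1 - u ≤ d) = ∅ := by
          rw [inter_high hT hU hu, image_eq_empty] at hempty
          exact hempty
        rw [← sdiff_union_of_subset hU, filter_union,
          card_union_of_disjoint (disjoint_filter_filter sdiff_disjoint), hcard, hUe, card_empty]
        omega
      · intro a ha b hb hab
        simp only [coe_filter, Set.mem_setOf_eq] at ha hb
        have := mem_Icc.mp (hT (sdiff_subset ha.1))
        have := mem_Icc.mp (hT (sdiff_subset hb.1))
        simp only at hab; omega
    · rw [inter_high hT hU hu, image_eq_empty] at hempty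
      exact hempty
  · rintro ⟨v, hcard, hempty⟩
    -- v ≤ q + 1, else filter is empty and m = 0
    have hvq : v ≤ q + 1 := by
      by_contra hv
      have : T.filter (fun d => v ≤ d) = ∅ := by
        rw [filter_eq_empty_iff]
        intro d hd
        have := mem_Icc.mp (hT hd); omega
      rw [this, card_empty] at hcard; omega
    set w := max v 1 with hw
    have hTw : T.filter (fun d => w ≤ d) = T.filter (fun d => v ≤ d) := by
      apply filter_congr
      intro d hd
      have := mem_Icc.mp (hT hd)
      omega
    have hUw : U.filter (fun d => w ≤ d) = ∅ := by
      rw [filter_eq_empty_iff] at hempty ⊢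
      intro d hd
      have := mem_Icc.mp (hT (hU hd))
      have := hempty hd
      omega
    refine ⟨q + 1 - w, by omega, ?_, ?_⟩
    · have hweq : q + 1 - (q + 1 - w) = w := by omega
      rw [inter_low hT hU (by omega), hweq, card_image_of_injOn]
      · have hsplit : T.filter (fun d => w ≤ d)
            = (T \ U).filter (fun d => w ≤ d) ∪ U.filter (fun d => w ≤ d) := by
          rw [← filter_union, sdiff_union_of_subset hU]
        rw [hUw, union_empty] at hsplit
        rw [← hsplit, hTw, hcard]
      · intro a ha b hb hab
        simp only [coe_filter, Set.mem_setOf_eq] at ha hb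
        have := mem_Icc.mp (hT (sdiff_subset ha.1))
        have := mem_Icc.mp (hT (sdiff_subset hb.1))
        simp only at hab; omega
    · have hweq : q + 1 - (q + 1 - w) = w := by omega
      rw [inter_high hT hU (by omega), hweq, hUw, image_empty]


noncomputable def wit (q : ℕ) (S : Finset ℕ) : ℕ :=
  sInf {x | x ∈ S ∧ x ≤ q ∧ 2*q+1-x ∈ S}


lemma wit_spec (hS : S ⊆ Icc 1 (2*q)) (hPF : ¬ Pairfree q S) :
    wit q S ∈ S ∧ wit q S ≤ q ∧ 2*q+1-(wit q S) ∈ S := by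
  have hne : {x | x ∈ S ∧ x ≤ q ∧ 2*q+1-x ∈ S}.Nonempty := by
    rw [Pairfree] at hPF
    push_neg at hPF
    obtain ⟨x, hx, hx'⟩ := hPF
    have h1 := mem_Icc.mp (hS hx)
    have h2 := mem_Icc.mp (hS hx')
    by_cases hxq : x ≤ q
    · exact ⟨x, hx, hxq, hx'⟩
    · refine ⟨2*q+1-x, hx', by omega, ?_⟩
      have : 2*q+1-(2*q+1-x) = x := by omega
      rw [this]; exact hx
  exact Nat.sInf_mem hne

lemma pairfree_of_card_one (hS : S ⊆ Icc 1 (2*q)) (h1 : S.card = 1) : Pairfree q S := by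
  intro x hx hx'
  have := mem_Icc.mp (hS hx)
  have := mem_Icc.mp (hS hx')
  have : x = 2*q+1-x := by
    by_contra hne
    have : 1 < S.card := Finset.one_lt_card.mpr ⟨x, hx, _, hx', hne⟩
    omega
  omega

lemma card_P (hr1 : 1 ≤ r) (hrq : r ≤ q) :
    (((Icc 1 (2*q)).powersetCard r).filter (fun S => ¬ Pairfree q S)).card ≤ (2*q)^(r-1) := by
  rcases Nat.eq_or_lt_of_le hr1 with hr | hr2
  · have : (((Icc 1 (2*q)).powersetCard r).filter (fun S => ¬ Pairfree q S)) = ∅ := by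
      rw [filter_eq_empty_iff]
      intro S hS
      rw [mem_powersetCard, ← hr] at hS
      exact not_not_intro (pairfree_of_card_one hS.1 hS.2)
    rw [this]; simp
  · have hq1 : 1 ≤ q := le_trans hr1 hrq
    have hcard : (((Icc 1 (2*q)).powersetCard r).filter (fun S => ¬ Pairfree q S)).card
        ≤ ((Icc 1 q) ×ˢ ((Icc 1 (2*q)).powersetCard (r-2))).card := by
      apply card_le_card_of_injOn
        (fun S => ((wit q S : ℕ), S \ {wit q S, 2*q+1 - wit q S}))
      · intro S hS
        rw [mem_coe, mem_filter, mem_powersetCard] at hS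
        obtain ⟨⟨hS1, hS2⟩, hPF⟩ := hS
        obtain ⟨hw1, hw2, hw3⟩ := wit_spec hS1 hPF
        have hwIcc := mem_Icc.mp (hS1 hw1)
        have hne : wit q S ≠ 2*q+1 - wit q S := by omega
        rw [mem_coe, mem_product, mem_powersetCard]
        refine ⟨mem_Icc.mpr (by dsimp only; omega), fun x hx => hS1 (mem_sdiff.mp hx).1, ?_⟩
        have hsub : {wit q S, 2*q+1 - wit q S} ⊆ S := by
          intro x hx
          simp only [mem_insert, mem_singleton] at hx
          rcases hx with rfl | rfl
          exacts [hw1, hw3]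
        rw [card_sdiff_of_subset hsub, card_insert_of_notMem (by simp [hne]), card_singleton, hS2]
      · intro S1 hS1 S2 hS2 heq
        rw [mem_coe, mem_filter, mem_powersetCard] at hS1 hS2
        obtain ⟨⟨hA1, _⟩, hP1⟩ := hS1
        obtain ⟨⟨hA2, _⟩, hP2⟩ := hS2
        obtain ⟨hw11, _, hw13⟩ := wit_spec hA1 hP1
        obtain ⟨hw21, _, hw23⟩ := wit_spec hA2 hP2
        simp only [Prod.mk.injEq] at heq
        obtain ⟨hw, hsd⟩ := heq
        have key : ∀ (S : Finset ℕ) (w : ℕ), w ∈ S → 2*q+1-w ∈ S →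
            S = S \ {w, 2*q+1-w} ∪ {w, 2*q+1-w} := by
          intro S w h1 h2
          rw [sdiff_union_of_subset]
          intro x hx
          simp only [mem_insert, mem_singleton] at hx
          rcases hx with rfl | rfl; exacts [h1, h2]
        rw [key S1 (wit q S1) hw11 hw13, key S2 (wit q S2) hw21 hw23, hsd, hw]
    calc (((Icc 1 (2*q)).powersetCard r).filter (fun S => ¬ Pairfree q S)).card
        ≤ ((Icc 1 q) ×ˢ ((Icc 1 (2*q)).powersetCard (r-2))).card := hcard
      _ = q * (2*q).choose (r-2) := by
          rw [card_product, card_powersetCard, Nat.card_Icc, Nat.card_Icc]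
          norm_num
      _ ≤ q * (2*q)^(r-2) := Nat.mul_le_mul_left _ (Nat.choose_le_pow _ _)
      _ ≤ (2*q)^(r-1) := by
          have h1 : r - 1 = (r-2) + 1 := by omega
          rw [h1, pow_succ]
          calc q * (2*q)^(r-2) = (2*q)^(r-2) * q := Nat.mul_comm _ _
            _ ≤ (2*q)^(r-2) * (2*q) := Nat.mul_le_mul_left _ (by omega)
      

-- NEW material
lemma leftBiased_iff_topm (hm1 : 1 ≤ m) (hmT : m ≤ T.card) (hT : T ⊆ Icc 1 q) (hU : U ⊆ T) :
    LeftBiased (2*q) m (encS q T U) ↔ U ⊆ T \ topm m T := by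
  rw [leftBiased_encS_iff hm1 hT hU]
  constructor
  · rintro ⟨v, hc, he⟩
    have heq := filter_eq_topm hc hmT
    intro x hx
    rw [mem_sdiff]
    refine ⟨hU hx, fun hxt => ?_⟩
    rw [← heq, mem_filter] at hxt
    have hmem : x ∈ U.filter (fun d => v ≤ d) := mem_filter.mpr ⟨hx, hxt.2⟩
    rw [he] at hmem
    exact notMem_empty _ hmem
  · intro h
    refine ⟨thr m T, topm_card hmT, ?_⟩
    rw [filter_eq_empty_iff]
    intro x hx hthr
    have h1 : x ∈ topm m T := mem_filter.mpr ⟨hU hx, hthr⟩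
    exact (mem_sdiff.mp (h hx)).2 h1

lemma card_PF (q r : ℕ) :
    (((Icc 1 (2*q)).powersetCard r).filter (fun S => Pairfree q S)).card
      = q.choose r * 2^r := by
  have hbij : (((Icc 1 q).powersetCard r).sigma (fun T => T.powerset)).card
      = (((Icc 1 (2*q)).powersetCard r).filter (fun S => Pairfree q S)).card := by
    refine card_bij' (fun p _ => encS q p.1 p.2) (fun S _ => ⟨decT q S, decU q S⟩)
      ?_ ?_ ?_ ?_
    · rintro ⟨T, U⟩ hp
      rw [mem_sigma, mem_powersetCard, mem_powerset] at hp
      obtain ⟨⟨hT, hTc⟩, hU⟩ := hp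
      rw [mem_filter, mem_powersetCard]
      exact ⟨⟨encS_subset hT hU, by rw [encS_card hT hU, hTc]⟩, encS_pairfree hT hU⟩
    · intro S hS
      rw [mem_filter, mem_powersetCard] at hS
      obtain ⟨⟨hS1, hS2⟩, hPF⟩ := hS
      rw [mem_sigma, mem_powersetCard, mem_powerset]
      exact ⟨⟨decT_subset hS1, by rw [decT_card hS1 hPF, hS2]⟩, decU_subset_decT⟩
    · rintro ⟨T, U⟩ hp
      rw [mem_sigma, mem_powersetCard, mem_powerset] at hp
      obtain ⟨⟨hT, hTc⟩, hU⟩ := hp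
      obtain ⟨h1, h2⟩ := dec_enc hT hU
      simp only
      rw [h1, h2]
    · intro S hS
      rw [mem_filter, mem_powersetCard] at hS
      exact enc_dec hS.1.1 hS.2
  rw [← hbij, card_sigma]
  have hconst : ∀ T ∈ (Icc 1 q).powersetCard r, T.powerset.card = 2^r := by
    intro T hT
    rw [card_powerset, (mem_powersetCard.mp hT).2]
  rw [Finset.sum_congr rfl hconst, sum_const, smul_eq_mul, card_powersetCard, Nat.card_Icc]
  norm_num

lemma card_LBPF (hm1 : 1 ≤ m) (hmr : m ≤ r) :
    (((Icc 1 (2*q)).powersetCard r).filter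
        (fun S => LeftBiased (2*q) m S ∧ Pairfree q S)).card
      = q.choose r * 2^(r-m) := by
  have hbij : (((Icc 1 q).powersetCard r).sigma (fun T => (T \ topm m T).powerset)).card
      = (((Icc 1 (2*q)).powersetCard r).filter
          (fun S => LeftBiased (2*q) m S ∧ Pairfree q S)).card := by
    refine card_bij' (fun p _ => encS q p.1 p.2) (fun S _ => ⟨decT q S, decU q S⟩)
      ?_ ?_ ?_ ?_
    · rintro ⟨T, U⟩ hp
      rw [mem_sigma, mem_powersetCard, mem_powerset] at hp
      obtain ⟨⟨hT, hTc⟩, hU⟩ := hp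
      have hUT : U ⊆ T := hU.trans sdiff_subset
      rw [mem_filter, mem_powersetCard]
      refine ⟨⟨encS_subset hT hUT, by rw [encS_card hT hUT, hTc]⟩, ?_, encS_pairfree hT hUT⟩
      exact (leftBiased_iff_topm hm1 (by omega) hT hUT).mpr hU
    · intro S hS
      rw [mem_filter, mem_powersetCard] at hS
      obtain ⟨⟨hS1, hS2⟩, hLB, hPF⟩ := hS
      rw [mem_sigma, mem_powersetCard, mem_powerset]
      have hTc : (decT q S).card = r := by rw [decT_card hS1 hPF, hS2]
      refine ⟨⟨decT_subset hS1, hTc⟩, ?_⟩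
      have hiff := leftBiased_iff_topm (T := decT q S) (U := decU q S) hm1
        (by omega) (decT_subset hS1) decU_subset_decT
      rw [enc_dec hS1 hPF] at hiff
      exact hiff.mp hLB
    · rintro ⟨T, U⟩ hp
      rw [mem_sigma, mem_powersetCard, mem_powerset] at hp
      obtain ⟨⟨hT, hTc⟩, hU⟩ := hp
      obtain ⟨h1, h2⟩ := dec_enc hT (hU.trans sdiff_subset)
      simp only
      rw [h1, h2]
    · intro S hS
      rw [mem_filter, mem_powersetCard] at hS
      exact enc_dec hS.1.1 hS.2.2
  rw [← hbij, card_sigma]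
  have hconst : ∀ T ∈ (Icc 1 q).powersetCard r, (T \ topm m T).powerset.card = 2^(r-m) := by
    intro T hT
    obtain ⟨-, hTc⟩ := mem_powersetCard.mp hT
    rw [card_powerset, card_sdiff_of_subset topm_subset, hTc, topm_card (by omega)]
  rw [Finset.sum_congr rfl hconst, sum_const, smul_eq_mul, card_powersetCard, Nat.card_Icc]
  norm_num


lemma main (q r m : ℕ) (hm1 : 1 ≤ m) (hmr : m ≤ r) (hrq : r ≤ q) :
    |(hcount (2*q) r m : ℝ) - ((2*q).choose r : ℝ) / 2 ^ m|
      ≤ ((2*q : ℕ) : ℝ) ^ (r-1) := by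
  classical
  set n := 2*q with hn
  set ALL := (Icc 1 n).powersetCard r with hALLdef
  have hALL : ALL.card = n.choose r := by
    rw [hALLdef, card_powersetCard, Nat.card_Icc]
    norm_num
  set Pc := (ALL.filter (fun S => ¬ Pairfree q S)).card with hPcdef
  have hsplit : q.choose r * 2^r + Pc = n.choose r := by
    rw [← card_PF q r, ← hALL, hPcdef]
    exact card_filter_add_card_filter_not _
  set LB := ALL.filter (LeftBiased n m) with hLBdef
  have hLB : hcount n r m = LB.card := rfl
  have hsplit2 : (LB.filter (fun S => Pairfree q S)).card
      + (LB.filter (fun S => ¬ Pairfree q S)).card = LB.card :=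
    card_filter_add_card_filter_not _
  have hLBPF : (LB.filter (fun S => Pairfree q S)).card = q.choose r * 2^(r-m) := by
    rw [hLBdef, filter_filter]
    exact card_LBPF hm1 hmr
  set e := (LB.filter (fun S => ¬ Pairfree q S)).card with hedef
  have he_le : e ≤ Pc := by
    rw [hedef, hPcdef]
    apply card_le_card
    intro S hS
    rw [hLBdef, filter_filter] at hS
    rw [mem_filter]
    exact ⟨(mem_filter.mp hS).1, (mem_filter.mp hS).2.2⟩
  have hPc_le : Pc ≤ n^(r-1) := card_P (hm1.trans hmr) hrq
  -- now real arithmetic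
  have hA : hcount n r m = q.choose r * 2^(r-m) + e := by
    rw [hLB, ← hsplit2, hLBPF]
  have hpow : ((q.choose r * 2^r : ℕ) : ℝ) = (q.choose r * 2^(r-m) : ℕ) * 2^m := by
    push_cast
    rw [mul_assoc, ← pow_add]
    congr 2
    omega
  have h2m : (0:ℝ) < 2^m := by positivity
  have hchoose : ((n.choose r : ℕ) : ℝ) = (q.choose r * 2^(r-m) : ℕ) * 2^m + Pc := by
    rw [← hsplit]
    push_cast [hpow]
    ring
  rw [hA, hchoose]
  have hexp : ((q.choose r * 2 ^ (r - m) : ℕ) * 2 ^ m + (Pc:ℝ)) / 2 ^ m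
      = (q.choose r * 2 ^ (r - m) : ℕ) + (Pc:ℝ) / 2 ^ m := by
    field_simp
  rw [hexp]
  push_cast
  have hPcdiv1 : (Pc:ℝ) / 2^m ≤ Pc := by
    apply div_le_self (by positivity)
    have : (1:ℝ) ≤ 2^m := one_le_pow₀ (by norm_num)
    linarith
  have hPcdiv0 : (0:ℝ) ≤ (Pc:ℝ) / 2^m := by positivity
  have heR : (e:ℝ) ≤ Pc := by exact_mod_cast he_le
  have hPcR : (Pc:ℝ) ≤ (n:ℝ)^(r-1) := by exact_mod_cast hPc_le
  rw [abs_le]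
  constructor <;> [linarith; linarith]


end Stmt4Aux

/-- For fixed `1 ≤ m ≤ r` there is a constant `C > 0` such that for all even
`n ≥ 2r`, `|h(n,r,m) - C(n,r)/2^m| ≤ C·n^(r-1)`. -/
theorem stmt4 (r m : ℕ) (h1 : 1 ≤ m) (hmr : m ≤ r) :
    ∃ C : ℝ, 0 < C ∧ ∀ n : ℕ, Even n → 2 * r ≤ n →
      |(hcount n r m : ℝ) - (n.choose r : ℝ) / 2 ^ m| ≤ C * (n : ℝ) ^ (r - 1) := by
  refine ⟨1, one_pos, ?_⟩
  intro n hev hn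
  obtain ⟨q, rfl⟩ := hev
  have h2q : q + q = 2 * q := by ring
  rw [one_mul, h2q]
  exact Stmt4Aux.main q r m h1 hmr (by omega)
end

section
/- Let n be an even positive integer and let t, m be integers with 1 ≤ m ≤ t. Then h(n,t,m) = Σ_{k=m}^{n/2} C(k−1, m−1)·C(n−2k, t−m), where C(a,b) denotes the binomial coefficient. -/
open Finset
open scoped Classical

/-- For even `n > 0` and `1 ≤ m ≤ t`,
`h(n,t,m) = Σ_{k=m}^{n/2} C(k-1, m-1)·C(n-2k, t-m)`. -/
theorem stmt5 (n t m : ℕ) (hn : 0 < n) (hev : Even n) (h1 : 1 ≤ m) (hmt : m ≤ t) :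
    hcount n t m =
      ∑ k ∈ Finset.Icc m (n / 2), (k - 1).choose (m - 1) * (n - 2 * k).choose (t - m) := by
  classical
  have h2 : n / 2 * 2 = n := Nat.div_mul_cancel hev.two_dvd
  set A : ℕ → Finset (Finset ℕ) := fun k =>
    ((Finset.Icc 1 n).powersetCard t).filter
      (fun S => k ∈ S ∧ (S.filter (· ≤ k)).card = m ∧ ∀ x ∈ S, x ≤ n - k) with hA
  -- uniqueness of k
  have huniq : ∀ (S : Finset ℕ) (k k' : ℕ), k ∈ S → (S.filter (· ≤ k)).card = m →
      k' ∈ S → (S.filter (· ≤ k')).card = m → k = k' := by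
    have key : ∀ (S : Finset ℕ) (k k' : ℕ), k < k' → (S.filter (· ≤ k)).card = m →
        k' ∈ S → (S.filter (· ≤ k')).card = m → False := by
      intro S k k' hlt hm hk' hm'
      have hsub : insert k' (S.filter (· ≤ k)) ⊆ S.filter (· ≤ k') := by
        intro x hx
        rcases Finset.mem_insert.1 hx with rfl | hx
        · exact Finset.mem_filter.2 ⟨hk', le_rfl⟩
        · rcases Finset.mem_filter.1 hx with ⟨hxS, hxk⟩
          exact Finset.mem_filter.2 ⟨hxS, hxk.trans hlt.le⟩
      have hnot : k' ∉ S.filter (· ≤ k) := by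
        intro hx
        exact absurd (Finset.mem_filter.1 hx).2 (by omega)
      have := Finset.card_le_card hsub
      rw [Finset.card_insert_of_notMem hnot, hm, hm'] at this
      omega
    intro S k k' hk hm hk' hm'
    rcases lt_trichotomy k k' with h | h | h
    · exact absurd (key S k k' h hm hk' hm') (fun x => x)
    · exact h
    · exact absurd (key S k' k h hm' hk hm) (fun x => x)
  -- the filtered set equals the disjoint union
  have hset : (((Finset.Icc 1 n).powersetCard t).filter (LeftBiased n m)) =
      (Finset.Icc m (n / 2)).biUnion A := by
    ext S
    simp only [Finset.mem_biUnion, Finset.mem_filter, Finset.mem_Icc, hA,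
      Finset.mem_powersetCard]
    constructor
    · rintro ⟨⟨hS, hcard⟩, u, hu, hcm, hemp⟩
      have h1n : ∀ x ∈ S, 1 ≤ x ∧ x ≤ n := by
        intro x hx; have := hS hx; rw [Finset.mem_Icc] at this; exact this
      have hTm : (S.filter (· ≤ u)).card = m := by
        rw [← hcm]; congr 1; ext x
        simp only [Finset.mem_filter, Finset.mem_inter, Finset.mem_Icc]
        constructor
        · rintro ⟨hx, hxu⟩; exact ⟨hx, (h1n x hx).1, hxu⟩
        · rintro ⟨hx, _, hxu⟩; exact ⟨hx, hxu⟩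
      have hne : (S.filter (· ≤ u)).Nonempty := by
        rw [← Finset.card_pos, hTm]; omega
      set k := (S.filter (· ≤ u)).max' hne with hkdef
      have hkmem := (S.filter (· ≤ u)).max'_mem hne
      have hkS : k ∈ S := (Finset.mem_filter.1 hkmem).1
      have hku : k ≤ u := (Finset.mem_filter.1 hkmem).2
      have hfk : S.filter (· ≤ k) = S.filter (· ≤ u) := by
        ext x
        simp only [Finset.mem_filter]
        constructor
        · rintro ⟨hx, hxk⟩; exact ⟨hx, hxk.trans hku⟩
        · rintro ⟨hx, hxu⟩
          exact ⟨hx, Finset.le_max' (S.filter (· ≤ u)) x (Finset.mem_filter.2 ⟨hx, hxu⟩)⟩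
      have hfkm : (S.filter (· ≤ k)).card = m := by rw [hfk]; exact hTm
      have hmk : m ≤ k := by
        have hsub : S.filter (· ≤ k) ⊆ Finset.Icc 1 k := by
          intro x hx
          rcases Finset.mem_filter.1 hx with ⟨hxS, hxk⟩
          exact Finset.mem_Icc.2 ⟨(h1n x hxS).1, hxk⟩
        have := Finset.card_le_card hsub
        rw [hfkm, Nat.card_Icc] at this; omega
      refine ⟨k, ⟨hmk, hku.trans hu⟩, ⟨hS, hcard⟩, hkS, hfkm, ?_⟩
      intro x hx
      have hxn := (h1n x hx).2
      have : x ∉ S ∩ Finset.Icc (n + 1 - u) n := by rw [hemp]; exact Finset.notMem_empty x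
      rw [Finset.mem_inter, Finset.mem_Icc] at this
      have h3 : ¬(n + 1 - u ≤ x ∧ x ≤ n) := fun hc => this ⟨hx, hc.1, hc.2⟩
      omega
    · rintro ⟨k, ⟨hmk, hk2⟩, ⟨hS, hcard⟩, hkS, hfm, hbound⟩
      have h1n : ∀ x ∈ S, 1 ≤ x ∧ x ≤ n := by
        intro x hx; have := hS hx; rw [Finset.mem_Icc] at this; exact this
      refine ⟨⟨hS, hcard⟩, k, hk2, ?_, ?_⟩
      · rw [← hfm]; congr 1; ext x
        simp only [Finset.mem_inter, Finset.mem_filter, Finset.mem_Icc]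
        constructor
        · rintro ⟨hx, _, hxk⟩; exact ⟨hx, hxk⟩
        · rintro ⟨hx, hxk⟩; exact ⟨hx, (h1n x hx).1, hxk⟩
      · rw [Finset.eq_empty_iff_forall_notMem]
        intro x hx
        rw [Finset.mem_inter, Finset.mem_Icc] at hx
        have := hbound x hx.1
        have hkn : k ≤ n := by omega
        omega
  rw [hcount, hset, Finset.card_biUnion]
  · apply Finset.sum_congr rfl
    intro k hk
    rw [Finset.mem_Icc] at hk
    obtain ⟨hmk, hk2⟩ := hk
    have hkn : 2 * k ≤ n := by omega
    have h1k : 1 ≤ k := by omega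
    have hcardB : (A k).card =
        (((Finset.Icc 1 (k-1)).powersetCard (m-1)) ×ˢ
          ((Finset.Icc (k+1) (n-k)).powersetCard (t-m))).card := by
      refine Finset.card_bij'
        (fun S _ => (S.filter (· < k), S.filter (fun x => k < x)))
        (fun p _ => insert k (p.1 ∪ p.2)) ?_ ?_ ?_ ?_
      · -- hi
        intro S hS
        simp only [hA, Finset.mem_filter, Finset.mem_powersetCard] at hS
        obtain ⟨⟨hSsub, hScard⟩, hkS, hfm, hbound⟩ := hS
        have h1n : ∀ x ∈ S, 1 ≤ x ∧ x ≤ n := by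
          intro x hx; have := hSsub hx; rw [Finset.mem_Icc] at this; exact this
        have hins : S.filter (· ≤ k) = insert k (S.filter (· < k)) := by
          ext x
          simp only [Finset.mem_filter, Finset.mem_insert]
          constructor
          · rintro ⟨hx, hxk⟩
            rcases eq_or_lt_of_le hxk with rfl | h
            · exact Or.inl rfl
            · exact Or.inr ⟨hx, h⟩
          · rintro (rfl | ⟨hx, hxk⟩)
            · exact ⟨hkS, le_rfl⟩
            · exact ⟨hx, hxk.le⟩
        have hknotmem : k ∉ S.filter (· < k) := by
          intro h; exact absurd (Finset.mem_filter.1 h).2 (lt_irrefl k)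
        have hPcard : (S.filter (· < k)).card = m - 1 := by
          have := hfm
          rw [hins, Finset.card_insert_of_notMem hknotmem] at this
          omega
        have hQcard : (S.filter (fun x => k < x)).card = t - m := by
          have hsplit := Finset.card_filter_add_card_filter_not (s := S) (· ≤ k)
          rw [hScard, hfm] at hsplit
          have : S.filter (fun a => ¬ a ≤ k) = S.filter (fun x => k < x) := by
            apply Finset.filter_congr; intro x _; simp [Nat.not_le]
          rw [this] at hsplit
          omega
        rw [Finset.mem_product, Finset.mem_powersetCard, Finset.mem_powersetCard]
        refine ⟨⟨?_, hPcard⟩, ?_, hQcard⟩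
        · intro x hx
          rcases Finset.mem_filter.1 hx with ⟨hxS, hxk⟩
          exact Finset.mem_Icc.2 ⟨(h1n x hxS).1, by omega⟩
        · intro x hx
          rcases Finset.mem_filter.1 hx with ⟨hxS, hxk⟩
          exact Finset.mem_Icc.2 ⟨by omega, hbound x hxS⟩
      · -- hj
        intro p hp
        rw [Finset.mem_product, Finset.mem_powersetCard, Finset.mem_powersetCard] at hp
        obtain ⟨⟨hP, hPc⟩, hQ, hQc⟩ := hp
        have hPlt : ∀ x ∈ p.1, x < k := by
          intro x hx; have := hP hx; rw [Finset.mem_Icc] at this; omega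
        have hQgt : ∀ x ∈ p.2, k < x ∧ x ≤ n - k := by
          intro x hx; have := hQ hx; rw [Finset.mem_Icc] at this; omega
        simp only [hA, Finset.mem_filter, Finset.mem_powersetCard]
        have hkPQ : k ∉ p.1 ∪ p.2 := by
          rw [Finset.mem_union]
          rintro (h | h)
          · exact absurd (hPlt k h) (lt_irrefl k)
          · exact absurd (hQgt k h).1 (lt_irrefl k)
        have hdisj : Disjoint p.1 p.2 := by
          rw [Finset.disjoint_left]
          intro x h1 h2
          exact absurd ((hQgt x h2).1.trans (hPlt x h1)) (lt_irrefl k)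
        refine ⟨⟨?_, ?_⟩, Finset.mem_insert_self _ _, ?_, ?_⟩
        · intro x hx
          rcases Finset.mem_insert.1 hx with rfl | hx
          · exact Finset.mem_Icc.2 ⟨h1k, by omega⟩
          · rcases Finset.mem_union.1 hx with h | h
            · have := hP h; rw [Finset.mem_Icc] at this
              exact Finset.mem_Icc.2 ⟨this.1, by omega⟩
            · have := hQgt x h
              exact Finset.mem_Icc.2 ⟨by omega, by omega⟩
        · rw [Finset.card_insert_of_notMem hkPQ, Finset.card_union_of_disjoint hdisj,
            hPc, hQc]
          omega
        · have : (insert k (p.1 ∪ p.2)).filter (· ≤ k) = insert k p.1 := by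
            ext x
            simp only [Finset.mem_filter, Finset.mem_insert, Finset.mem_union]
            constructor
            · rintro ⟨rfl | h | h, hxk⟩
              · exact Or.inl rfl
              · exact Or.inr h
              · exact absurd hxk (by have := (hQgt x h).1; omega)
            · rintro (rfl | h)
              · exact ⟨Or.inl rfl, le_rfl⟩
              · exact ⟨Or.inr (Or.inl h), (hPlt x h).le⟩
          rw [this, Finset.card_insert_of_notMem (fun h => absurd (hPlt k h) (lt_irrefl k)), hPc]
          omega
        · intro x hx
          rcases Finset.mem_insert.1 hx with rfl | hx
          · omega
          · rcases Finset.mem_union.1 hx with h | h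
            · have := hPlt x h; omega
            · exact (hQgt x h).2
      · -- left inverse
        intro S hS
        simp only [hA, Finset.mem_filter, Finset.mem_powersetCard] at hS
        obtain ⟨⟨hSsub, hScard⟩, hkS, hfm, hbound⟩ := hS
        ext x
        simp only [Finset.mem_insert, Finset.mem_union, Finset.mem_filter]
        constructor
        · rintro (rfl | ⟨h, _⟩ | ⟨h, _⟩) <;> first | exact hkS | exact h
        · intro hx
          rcases lt_trichotomy x k with h | rfl | h
          · exact Or.inr (Or.inl ⟨hx, h⟩)
          · exact Or.inl rfl
          · exact Or.inr (Or.inr ⟨hx, h⟩)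
      · -- right inverse
        intro p hp
        rw [Finset.mem_product, Finset.mem_powersetCard, Finset.mem_powersetCard] at hp
        obtain ⟨⟨hP, _⟩, hQ, _⟩ := hp
        have hPlt : ∀ x ∈ p.1, x < k := by
          intro x hx; have := hP hx; rw [Finset.mem_Icc] at this; omega
        have hQgt : ∀ x ∈ p.2, k < x := by
          intro x hx; have := hQ hx; rw [Finset.mem_Icc] at this; omega
        have e1 : (insert k (p.1 ∪ p.2)).filter (· < k) = p.1 := by
          ext x
          simp only [Finset.mem_filter, Finset.mem_insert, Finset.mem_union]
          constructor
          · rintro ⟨heq | h | h, hxk⟩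
            · exact absurd hxk (by omega)
            · exact h
            · exact absurd hxk (by have := hQgt x h; omega)
          · intro h; exact ⟨Or.inr (Or.inl h), hPlt x h⟩
        have e2 : (insert k (p.1 ∪ p.2)).filter (fun x => k < x) = p.2 := by
          ext x
          simp only [Finset.mem_filter, Finset.mem_insert, Finset.mem_union]
          constructor
          · rintro ⟨heq | h | h, hxk⟩
            · exact absurd hxk (by omega)
            · exact absurd hxk (by have := hPlt x h; omega)
            · exact h
          · intro h; exact ⟨Or.inr (Or.inr h), hQgt x h⟩
        exact Prod.ext e1 e2
    rw [hcardB, Finset.card_product, Finset.card_powersetCard, Finset.card_powersetCard,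
      Nat.card_Icc, Nat.card_Icc]
    have e1 : k - 1 + 1 - 1 = k - 1 := by omega
    have e2 : n - k + 1 - (k + 1) = n - 2 * k := by omega
    rw [e1, e2]
  · -- disjointness
    intro k hk k' hk' hne
    rw [Function.onFun, Finset.disjoint_left]
    intro S hSk hSk'
    simp only [hA, Finset.mem_filter] at hSk hSk'
    exact hne (huniq S k k' hSk.2.1 hSk.2.2.1 hSk'.2.1 hSk'.2.2.1)
end

section
/- Let r and s be integers with 2 ≤ r ≤ s such that r divides s, let k = s/r, and let n be a positive integer divisible by k. Then ν(n, P^{(r)}_s) ≥ C(n/k, r), where C(n/k, r) is the binomial coefficient. -/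
open Finset
open scoped Classical

def aFun (A : Finset ℕ) (t : ℕ) : ℕ := (A.sort (· ≤ ·)).getD t 0

lemma aFun_mem (A : Finset ℕ) {t : ℕ} (ht : t < A.card) : aFun A t ∈ A := by
  have hlen : (A.sort (· ≤ ·)).length = A.card := Finset.length_sort _
  have ht' : t < (A.sort (· ≤ ·)).length := by omega
  rw [aFun, List.getD_eq_getElem _ _ ht']
  exact (Finset.mem_sort _).mp (List.getElem_mem _)

lemma aFun_lt (A : Finset ℕ) {t t' : ℕ} (h : t < t') (ht' : t' < A.card) :
    aFun A t < aFun A t' := by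
  have hlen : (A.sort (· ≤ ·)).length = A.card := Finset.length_sort _
  have hs : (A.sort (· ≤ ·)).Pairwise (· < ·) := List.sortedLT_iff_pairwise.mp (Finset.sortedLT_sort A)
  rw [aFun, aFun, List.getD_eq_getElem _ _ (by omega), List.getD_eq_getElem _ _ (by omega)]
  have := List.pairwise_iff_get.mp hs ⟨t, by omega⟩ ⟨t', by omega⟩ h
  simpa using this

lemma aFun_surj (A : Finset ℕ) {x : ℕ} (hx : x ∈ A) : ∃ t, t < A.card ∧ aFun A t = x := by
  have hx' : x ∈ A.sort (· ≤ ·) := (Finset.mem_sort _).mpr hx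
  obtain ⟨⟨t, ht⟩, hget⟩ := List.mem_iff_get.mp hx'
  refine ⟨t, by simpa [Finset.length_sort] using ht, ?_⟩
  rw [aFun, List.getD_eq_getElem _ _ ht]
  simpa using hget

def Fmap (r m : ℕ) (A : Finset ℕ) (v : ℕ) : ℕ :=
  ((v - 1) / r) * m + aFun A ((v - 1) % r)

lemma aFun_bounds {r m : ℕ} (hr0 : 0 < r) {A : Finset ℕ} (hA : A ⊆ Finset.Icc 1 m)
    (hcard : A.card = r) {t : ℕ} (ht : t < r) : 1 ≤ aFun A t ∧ aFun A t ≤ m := by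
  have := hA (aFun_mem A (hcard ▸ ht))
  simpa [Finset.mem_Icc] using this

lemma proj_Fmap {r m : ℕ} (hr0 : 0 < r) {A : Finset ℕ} (hA : A ⊆ Finset.Icc 1 m)
    (hcard : A.card = r) (v : ℕ) :
    (Fmap r m A v - 1) % m + 1 = aFun A ((v - 1) % r) := by
  have ht : (v - 1) % r < r := Nat.mod_lt _ hr0
  obtain ⟨h1, h2⟩ := aFun_bounds hr0 hA hcard ht
  set a := aFun A ((v - 1) % r) with ha
  set j := (v - 1) / r with hj
  have hm1 : 1 ≤ m := le_trans h1 h2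
  have e1 : Fmap r m A v - 1 = (a - 1) + j * m := by
    simp only [Fmap, ← ha, ← hj]; omega
  rw [e1, Nat.add_mul_mod_self_right, Nat.mod_eq_of_lt (by omega)]
  omega

lemma edge_proj {r m i : ℕ} (hr0 : 0 < r) (hi : 1 ≤ i) {A : Finset ℕ}
    (hA : A ⊆ Finset.Icc 1 m) (hcard : A.card = r) :
    (Finset.Icc i (i + r - 1)).image (fun v => (Fmap r m A v - 1) % m + 1) = A := by
  ext x
  simp only [Finset.mem_image, Finset.mem_Icc]
  constructor
  · rintro ⟨v, hv, rfl⟩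
    rw [proj_Fmap hr0 hA hcard]
    exact aFun_mem A (by rw [hcard]; exact Nat.mod_lt _ hr0)
  · intro hx
    obtain ⟨t, ht, hat⟩ := aFun_surj A hx
    rw [hcard] at ht
    obtain ⟨Q, d, hqd, hdlt, hQ⟩ :
        ∃ Q d, Q + d = i - 1 ∧ d < r ∧ Q % r = 0 :=
      ⟨r * ((i - 1) / r), (i - 1) % r, Nat.div_add_mod _ _, Nat.mod_lt _ hr0,
        Nat.mul_mod_right _ _⟩
    by_cases hc : d ≤ t
    · refine ⟨Q + t + 1, by omega, ?_⟩
      have : (Q + t + 1 - 1) % r = t := by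
        simp [Nat.add_mod, hQ, Nat.mod_eq_of_lt ht]
      rw [proj_Fmap hr0 hA hcard, this, hat]
    · refine ⟨Q + r + t + 1, by omega, ?_⟩
      have : (Q + r + t + 1 - 1) % r = t := by
        have : Q + r + t + 1 - 1 = Q + (r + t) := by omega
        rw [this, Nat.add_mod, hQ, Nat.add_mod_left]
        simp [Nat.mod_eq_of_lt ht]
      rw [proj_Fmap hr0 hA hcard, this, hat]

lemma Fmap_strictMonoOn {r s m k : ℕ} (hr0 : 0 < r) (hs : s = k * r)
    {A : Finset ℕ} (hA : A ⊆ Finset.Icc 1 m) (hcard : A.card = r) :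
    StrictMonoOn (Fmap r m A) ↑(Finset.Icc 1 s) := by
  intro u hu v hv huv
  simp only [Finset.coe_Icc, Set.mem_Icc] at hu hv
  have hju : (u - 1) / r ≤ (v - 1) / r := Nat.div_le_div_right (by omega)
  rcases eq_or_lt_of_le hju with heq | hlt
  · have h1 : r * ((v - 1) / r) + (u - 1) % r = u - 1 := by
      rw [← heq]; exact Nat.div_add_mod _ _
    have h2 : r * ((v - 1) / r) + (v - 1) % r = v - 1 := Nat.div_add_mod _ _
    have htt : (u - 1) % r < (v - 1) % r := by
      have : r * ((v - 1) / r) + (u - 1) % r < r * ((v - 1) / r) + (v - 1) % r := by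
        rw [h1, h2]; omega
      exact lt_of_add_lt_add_left this
    rw [Fmap, Fmap, heq]
    exact Nat.add_lt_add_left (aFun_lt A htt (by rw [hcard]; exact Nat.mod_lt _ hr0)) _
  · obtain ⟨hu1, hu2⟩ := aFun_bounds hr0 hA hcard (Nat.mod_lt (u-1) hr0)
    obtain ⟨hv1, hv2⟩ := aFun_bounds hr0 hA hcard (Nat.mod_lt (v-1) hr0)
    rw [Fmap, Fmap]
    calc ((u-1)/r) * m + aFun A ((u-1) % r) ≤ ((u-1)/r) * m + m := by omega
      _ = ((u-1)/r + 1) * m := by ring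
      _ ≤ ((v-1)/r) * m := Nat.mul_le_mul_right m (by omega)
      _ < ((v-1)/r) * m + aFun A ((v-1) % r) := by omega

lemma Fmap_range {r s m k n : ℕ} (hr0 : 0 < r) (hs : s = k * r) (hnm : k * m = n)
    {A : Finset ℕ} (hA : A ⊆ Finset.Icc 1 m) (hcard : A.card = r)
    {v : ℕ} (hv : v ∈ Finset.Icc 1 s) : Fmap r m A v ∈ Finset.Icc 1 n := by
  simp only [Finset.mem_Icc] at hv
  obtain ⟨h1, h2⟩ := aFun_bounds hr0 hA hcard (Nat.mod_lt (v-1) hr0)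
  have hjk : (v - 1) / r < k := by
    rw [Nat.div_lt_iff_lt_mul hr0]; omega
  have : (v - 1) / r * m + m ≤ n := by
    calc (v - 1) / r * m + m = ((v - 1) / r + 1) * m := by ring
      _ ≤ k * m := Nat.mul_le_mul_right m (by omega)
      _ = n := hnm
  rw [Fmap, Finset.mem_Icc]
  omega
/-- If `2 ≤ r ≤ s`, `r ∣ s`, `k = s/r` and `k ∣ n` with `n > 0`, then
`ν(n, P^{(r)}_s) ≥ C(n/k, r)`. -/
theorem stmt6 (r s k n : ℕ) (hr : 2 ≤ r) (hrs : r ≤ s) (hdvd : r ∣ s) (hk : k = s / r)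
    (hn : 0 < n) (hkn : k ∣ n) :
    (n / k).choose r ≤ nu n s (pathEdges r s) := by
  classical
  have hr0 : 0 < r := by omega
  have hs : s = k * r := by rw [hk, Nat.div_mul_cancel hdvd]
  have hk1 : 1 ≤ k := by
    rw [hk]; exact (Nat.one_le_div_iff hr0).mpr hrs
  set m := n / k with hmdef
  have hnm : k * m = n := Nat.mul_div_cancel' hkn
  have hm1 : 1 ≤ m := by
    rcases Nat.eq_zero_or_pos m with h | h
    · rw [h, Nat.mul_zero] at hnm; omega
    · exact h
  -- the copies
  set Cop : Finset ℕ → Finset (Finset ℕ) :=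
    fun A => (pathEdges r s).image (fun e => e.image (Fmap r m A)) with hCop
  -- every element of a copy projects back to A
  have Cop_proj : ∀ A : Finset ℕ, A ⊆ Finset.Icc 1 m → A.card = r →
      ∀ x ∈ Cop A, x.image (fun v => (v - 1) % m + 1) = A := by
    intro A hA hcard x hx
    rw [hCop] at hx
    obtain ⟨e, he, rfl⟩ := Finset.mem_image.mp hx
    rw [pathEdges] at he
    obtain ⟨i, hi, rfl⟩ := Finset.mem_image.mp he
    rw [Finset.mem_Icc] at hi
    rw [Finset.image_image]
    exact edge_proj hr0 hi.1 hA hcard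
  have Cop_nonempty : ∀ A : Finset ℕ, (Cop A).Nonempty := by
    intro A
    refine ⟨(Finset.Icc 1 (1 + r - 1)).image (Fmap r m A), ?_⟩
    rw [hCop]
    exact Finset.mem_image_of_mem _ (Finset.mem_image_of_mem _ (by
      rw [Finset.mem_Icc]; omega))
  have Cop_isCopy : ∀ A ∈ (Finset.Icc 1 m).powersetCard r, IsCopy n s (pathEdges r s) (Cop A) := by
    intro A hA
    rw [Finset.mem_powersetCard] at hA
    exact ⟨Fmap r m A, Fmap_strictMonoOn hr0 hs hA.1 hA.2,
      fun v hv => Fmap_range hr0 hs hnm hA.1 hA.2 hv, rfl⟩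
  -- the packing
  set P : Finset (Finset (Finset ℕ)) := ((Finset.Icc 1 m).powersetCard r).image Cop with hP
  have hdisj : ∀ A ∈ (Finset.Icc 1 m).powersetCard r, ∀ B ∈ (Finset.Icc 1 m).powersetCard r,
      A ≠ B → Disjoint (Cop A) (Cop B) := by
    intro A hA B hB hAB
    rw [Finset.mem_powersetCard] at hA hB
    rw [Finset.disjoint_left]
    intro x hxA hxB
    exact hAB ((Cop_proj A hA.1 hA.2 x hxA).symm.trans (Cop_proj B hB.1 hB.2 x hxB))
  have hinj : Set.InjOn Cop ↑((Finset.Icc 1 m).powersetCard r) := by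
    intro A hA B hB hE
    by_contra hne
    obtain ⟨x, hx⟩ := Cop_nonempty A
    exact (Finset.disjoint_left.mp (hdisj A hA B hB hne) hx) (hE ▸ hx)
  have hPcard : P.card = m.choose r := by
    rw [hP, Finset.card_image_of_injOn hinj, Finset.card_powersetCard, Nat.card_Icc]
    norm_num
  have hPacking : IsPacking n s (pathEdges r s) P := by
    constructor
    · intro C hC
      obtain ⟨A, hA, rfl⟩ := Finset.mem_image.mp hC
      exact Cop_isCopy A hA
    · intro C hC C' hC' hne
      obtain ⟨A, hA, rfl⟩ := Finset.mem_image.mp hC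
      obtain ⟨B, hB, rfl⟩ := Finset.mem_image.mp hC'
      exact hdisj A hA B hB (fun h => hne (h ▸ rfl))
  -- bounded above
  have hbdd : BddAbove {x | ∃ Q : Finset (Finset (Finset ℕ)),
      IsPacking n s (pathEdges r s) Q ∧ Q.card = x} := by
    refine ⟨((Finset.Icc 1 n).powerset.powerset).card, ?_⟩
    rintro x ⟨Q, hQ, rfl⟩
    refine Finset.card_le_card ?_
    intro C hC
    obtain ⟨f, hf1, hf2, rfl⟩ := hQ.1 C hC
    rw [Finset.mem_powerset]
    intro e he
    obtain ⟨e', he', rfl⟩ := Finset.mem_image.mp he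
    rw [Finset.mem_powerset]
    intro w hw
    obtain ⟨v, hv, rfl⟩ := Finset.mem_image.mp hw
    rw [pathEdges] at he'
    obtain ⟨i, hi, rfl⟩ := Finset.mem_image.mp he'
    rw [Finset.mem_Icc] at hi hv
    exact hf2 v (by rw [Finset.mem_Icc]; omega)
  exact le_csSup hbdd ⟨P, hPacking, hPcard⟩
end

section
/- Let r and s be integers with 2 ≤ r ≤ s such that r divides s, let k = s/r, and let n be a positive integer divisible by k. Then there exists a fractional P^{(r)}_s-transversal of K^{(r)}_n of total weight C(n/k, r); in particular τ*(n, P^{(r)}_s) ≤ C(n/k, r), where C(n/k, r) is the binomial coefficient. -/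
open Finset
open scoped Classical

lemma aux_good_count (r k s : ℕ) (hr : 2 ≤ r) (hk1 : 1 ≤ k) (hs : s = k * r)
    (g : ℕ → ℕ)
    (hmono : ∀ i j, 1 ≤ i → i ≤ j → j ≤ s → g i ≤ g j)
    (hub : ∀ i, 1 ≤ i → i ≤ s → g i ≤ k)
    (hlb : ∀ i, 1 ≤ i → i ≤ s → 1 ≤ g i) :
    k ≤ ((Finset.Icc 1 (s - r + 1)).filter (fun i => g (i + r - 1) = g i)).card := by
  have hrs : r ≤ s := by
    calc r = 1 * r := (one_mul r).symm
    _ ≤ k * r := Nat.mul_le_mul_right r hk1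
    _ = s := hs.symm
  set T := Finset.Icc 1 (s - r + 1) with hT
  set G := T.filter (fun i => g (i + r - 1) = g i) with hG
  set B := T.filter (fun i => ¬ g (i + r - 1) = g i) with hB
  have hTcard : T.card = s - r + 1 := by rw [hT, Nat.card_Icc]; omega
  have hGB : G.card + B.card = s - r + 1 := by
    rw [hG, hB, Finset.card_filter_add_card_filter_not, hTcard]
  -- key inequality
  have key : ∑ i ∈ T, g i + B.card ≤ ∑ i ∈ T, g (i + r - 1) := by
    have h1 : ∑ i ∈ G, g i ≤ ∑ i ∈ G, g (i + r - 1) := by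
      apply Finset.sum_le_sum
      intro i hi
      rw [hG, Finset.mem_filter] at hi
      omega
    have h2 : ∑ i ∈ B, g i + B.card ≤ ∑ i ∈ B, g (i + r - 1) := by
      rw [Finset.card_eq_sum_ones, ← Finset.sum_add_distrib]
      apply Finset.sum_le_sum
      intro i hi
      rw [hB, Finset.mem_filter, hT, Finset.mem_Icc] at hi
      have := hmono i (i + r - 1) hi.1.1 (by omega) (by omega)
      omega
    have h3 := Finset.sum_filter_add_sum_filter_not T (fun i => g (i + r - 1) = g i) g
    have h4 := Finset.sum_filter_add_sum_filter_not T (fun i => g (i + r - 1) = g i)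
      (fun i => g (i + r - 1))
    rw [← hG, ← hB] at h3 h4
    omega
  -- reindexing
  have hre : ∑ i ∈ T, g (i + r - 1) = ∑ i ∈ Finset.Icc r s, g i := by
    have himg : Finset.Icc r s = T.image (fun i => i + (r - 1)) := by
      rw [hT]
      rw [show (fun i => i + (r-1)) = (· + (r-1)) from rfl, Finset.image_add_right_Icc]
      congr 1 <;> omega
    rw [himg, Finset.sum_image (by intro x _ y _ h; have h' : x + (r-1) = y + (r-1) := h; omega)]
    apply Finset.sum_congr rfl
    intro i _
    congr 1
    omega
  -- consecutive splits
  have c1 : ∑ i ∈ Finset.Icc 1 (r-1), g i + ∑ i ∈ Finset.Icc r s, g i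
      = ∑ i ∈ Finset.Icc 1 s, g i := by
    have h := Finset.sum_Ioc_consecutive g (show 0 ≤ r - 1 by omega) (show r - 1 ≤ s by omega)
    rw [← Finset.Icc_add_one_left_eq_Ioc, ← Finset.Icc_add_one_left_eq_Ioc, ← Finset.Icc_add_one_left_eq_Ioc] at h
    simpa [show r - 1 + 1 = r by omega] using h
  have c2 : ∑ i ∈ T, g i + ∑ i ∈ Finset.Icc (s-r+2) s, g i = ∑ i ∈ Finset.Icc 1 s, g i := by
    have h := Finset.sum_Ioc_consecutive g (show 0 ≤ s - r + 1 by omega)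
      (show s - r + 1 ≤ s by omega)
    rw [← Finset.Icc_add_one_left_eq_Ioc, ← Finset.Icc_add_one_left_eq_Ioc, ← Finset.Icc_add_one_left_eq_Ioc] at h
    rw [hT]
    simpa [show s - r + 1 + 1 = s - r + 2 by omega] using h
  -- bounds
  have b1 : ∑ i ∈ Finset.Icc (s-r+2) s, g i ≤ (r-1) * k := by
    have := Finset.sum_le_card_nsmul (Finset.Icc (s-r+2) s) g k
      (fun x hx => by rw [Finset.mem_Icc] at hx; exact hub x (by omega) hx.2)
    rwa [Nat.card_Icc, smul_eq_mul, show s + 1 - (s - r + 2) = r - 1 by omega] at this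
  have b2 : (r-1) * 1 ≤ ∑ i ∈ Finset.Icc 1 (r-1), g i := by
    have := Finset.card_nsmul_le_sum (Finset.Icc 1 (r-1)) g 1
      (fun x hx => by rw [Finset.mem_Icc] at hx; exact hlb x hx.1 (by omega))
    rwa [Nat.card_Icc, smul_eq_mul, show r - 1 + 1 - 1 = r - 1 by omega] at this
  have hBbd : B.card + (r - 1) ≤ (r - 1) * k := by omega
  have hrk : k + (r - 1) * k = s := by
    have h : (r - 1 + 1) * k = r * k := by rw [Nat.sub_add_cancel (by omega : 1 ≤ r)]
    calc k + (r-1)*k = (r-1+1)*k := by ring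
      _ = r * k := h
      _ = s := by rw [hs, mul_comm]
  obtain ⟨p, hp1, hp2⟩ : ∃ p, B.card + (r-1) ≤ p ∧ k + p = s := ⟨(r-1)*k, hBbd, hrk⟩
  omega

set_option maxHeartbeats 1000000 in
/-- If `2 ≤ r ≤ s`, `r ∣ s`, `k = s/r` and `k ∣ n` with `n > 0`, then there is a
fractional `P^{(r)}_s`-transversal of `K^{(r)}_n` of total weight `C(n/k, r)`; in particular
`τ*(n, P^{(r)}_s) ≤ C(n/k, r)`. -/
theorem stmt7 (r s k n : ℕ) (hr : 2 ≤ r) (hrs : r ≤ s) (hdvd : r ∣ s) (hk : k = s / r)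
    (hn : 0 < n) (hkn : k ∣ n) :
    (∃ w : Finset ℕ → ℝ, IsFracTransversal n r s (pathEdges r s) w ∧
      ∑ e ∈ (Finset.Icc 1 n).powersetCard r, w e = ((n / k).choose r : ℝ)) ∧
    tauStar n r s (pathEdges r s) ≤ ((n / k).choose r : ℝ) := by
  classical
  have hr0 : 0 < r := by omega
  have hk1 : 1 ≤ k := hk ▸ (Nat.one_le_div_iff hr0).mpr hrs
  have hs : s = k * r := by rw [hk]; exact (Nat.div_mul_cancel hdvd).symm
  obtain ⟨m, hm⟩ := hkn
  have hnk : n / k = m := by rw [hm, Nat.mul_div_cancel_left m (by omega : 0 < k)]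
  have hm1 : 1 ≤ m := by
    rcases Nat.eq_zero_or_pos m with h | h
    · subst h; omega
    · exact h
  rw [hnk]
  -- basic block facts
  have hlt_succ_mul : ∀ a : ℕ, a < (a / m + 1) * m := by
    intro a
    have h1 := Nat.div_add_mod a m
    have h2 := Nat.mod_lt a (show 0 < m by omega)
    calc a = m * (a / m) + a % m := h1.symm
      _ < m * (a / m) + m := Nat.add_lt_add_left h2 _
      _ = (a / m + 1) * m := by ring
  have hblk_mem : ∀ v, 1 ≤ v → v ≤ n →
      v ∈ Finset.Icc (((v-1)/m + 1 - 1) * m + 1) (((v-1)/m + 1) * m) := by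
    intro v hv1 hvn
    rw [Finset.mem_Icc, Nat.add_sub_cancel]
    constructor
    · have := Nat.div_mul_le_self (v - 1) m
      omega
    · have := hlt_succ_mul (v - 1)
      omega
  have hblk_ub : ∀ v, 1 ≤ v → v ≤ n → (v-1)/m + 1 ≤ k := by
    intro v hv1 hvn
    have : (v - 1) / m < k := by
      rw [Nat.div_lt_iff_lt_mul (show 0 < m by omega)]
      omega
    omega
  have hblksub : ∀ j, 1 ≤ j → j ≤ k →
      Finset.Icc ((j-1)*m + 1) (j*m) ⊆ Finset.Icc 1 n := by
    intro j hj1 hjk x hx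
    rw [Finset.mem_Icc] at hx ⊢
    have : j * m ≤ k * m := Nat.mul_le_mul_right m hjk
    omega
  set D : Finset (Finset ℕ) := (Finset.Icc 1 k).biUnion
    (fun j => (Finset.Icc ((j-1)*m + 1) (j*m)).powerset) with hD
  clear_value D
  have hDmem : ∀ e : Finset ℕ,
      e ∈ D ↔ ∃ j, 1 ≤ j ∧ j ≤ k ∧ e ⊆ Finset.Icc ((j-1)*m + 1) (j*m) := by
    intro e
    simp [hD, Finset.mem_biUnion, Finset.mem_powerset, Finset.mem_Icc]
    tauto
  -- the main existence claim
  have hmain : ∃ w : Finset ℕ → ℝ, IsFracTransversal n r s (pathEdges r s) w ∧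
      ∑ e ∈ (Finset.Icc 1 n).powersetCard r, w e = (m.choose r : ℝ) := by
    refine ⟨fun e => if e ∈ D then (k:ℝ)⁻¹ else 0, ⟨?_, ?_⟩, ?_⟩
    · intro e _
      dsimp only
      split
      · positivity
      · exact le_rfl
    · -- every copy has weight at least 1
      rintro C ⟨f, hf, hfm, rfl⟩
      have hfIcc : ∀ i, 1 ≤ i → i ≤ s → 1 ≤ f i ∧ f i ≤ n := by
        intro i h1 h2
        have := hfm i (Finset.mem_Icc.mpr ⟨h1, h2⟩)
        rw [Finset.mem_Icc] at this
        exact this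
      set gg : ℕ → ℕ := fun i => (f i - 1) / m + 1 with hgg
      clear_value gg
      have hggmono : ∀ i j, 1 ≤ i → i ≤ j → j ≤ s → gg i ≤ gg j := by
        intro i j h1 h2 h3
        have hfij : f i ≤ f j := by
          rcases eq_or_lt_of_le h2 with h | h
          · rw [h]
          · exact le_of_lt (hf (by simp [Finset.mem_Icc]; omega)
              (by simp [Finset.mem_Icc]; omega) h)
        simp only [hgg]
        exact Nat.add_le_add_right (Nat.div_le_div_right (by omega)) 1
      have hggub : ∀ i, 1 ≤ i → i ≤ s → gg i ≤ k := by
        intro i h1 h2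
        simp only [hgg]
        exact hblk_ub (f i) (hfIcc i h1 h2).1 (hfIcc i h1 h2).2
      have hgglb : ∀ i, 1 ≤ i → i ≤ s → 1 ≤ gg i := fun i _ _ => by simp [hgg]
      set G := (Finset.Icc 1 (s - r + 1)).filter (fun i => gg (i + r - 1) = gg i) with hG
      clear_value G
      have hGcard : k ≤ G.card := by
        rw [hG]
        exact aux_good_count r k s hr hk1 hs gg hggmono hggub hgglb
      set F : ℕ → Finset ℕ := fun i => (Finset.Icc i (i + r - 1)).image f with hF
      clear_value F
      -- each good index gives an edge in a block
      have hFgood : ∀ i ∈ G, F i ∈ D := by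
        intro i hi
        rw [hG, Finset.mem_filter, Finset.mem_Icc] at hi
        obtain ⟨⟨hi1, hi2⟩, hieq⟩ := hi
        rw [hDmem]
        refine ⟨gg i, by simp [hgg], hggub i hi1 (by omega), ?_⟩
        intro x hx
        rw [hF] at hx
        simp only [Finset.mem_image, Finset.mem_Icc] at hx
        obtain ⟨u, ⟨hu1, hu2⟩, rfl⟩ := hx
        have hu1' : 1 ≤ u := by omega
        have hu2' : u ≤ s := by omega
        have hgu : gg u = gg i := by
          have h1 := hggmono i u hi1 hu1 (by omega)
          have h2 := hggmono u (i + r - 1) hu1' hu2 (by omega)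
          omega
        have := hblk_mem (f u) (hfIcc u hu1' hu2').1 (hfIcc u hu1' hu2').2
        rw [show (f u - 1)/m + 1 = gg u from by rw [hgg], hgu] at this
        exact this
      -- injectivity of F on G
      have hFinj : ∀ x ∈ G, ∀ y ∈ G, F x = F y → x = y := by
        intro a ha b hb hab
        rw [hG, Finset.mem_filter, Finset.mem_Icc] at ha hb
        have hsub : ∀ x ∈ Finset.Icc a (a + r - 1), x ∈ Finset.Icc b (b + r - 1) := by
          intro x hx
          have hfx : f x ∈ F b := by
            rw [← hab, hF]
            exact Finset.mem_image_of_mem f hx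
          rw [hF] at hfx
          simp only [Finset.mem_image] at hfx
          obtain ⟨y, hy, hxy⟩ := hfx
          rw [Finset.mem_Icc] at hx hy
          have hxeq : x = y := hf.injOn
            (by simp [Finset.mem_Icc]; omega) (by simp [Finset.mem_Icc]; omega) hxy.symm
          rw [Finset.mem_Icc]
          omega
        have hsub' : ∀ x ∈ Finset.Icc b (b + r - 1), x ∈ Finset.Icc a (a + r - 1) := by
          intro x hx
          have hfx : f x ∈ F a := by
            rw [hab, hF]
            exact Finset.mem_image_of_mem f hx
          rw [hF] at hfx
          simp only [Finset.mem_image] at hfx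
          obtain ⟨y, hy, hxy⟩ := hfx
          rw [Finset.mem_Icc] at hx hy
          have hxeq : x = y := hf.injOn
            (by simp [Finset.mem_Icc]; omega) (by simp [Finset.mem_Icc]; omega) hxy.symm
          rw [Finset.mem_Icc]
          omega
        have h1 := hsub a (Finset.mem_Icc.mpr ⟨le_rfl, by omega⟩)
        have h2 := hsub' b (Finset.mem_Icc.mpr ⟨le_rfl, by omega⟩)
        rw [Finset.mem_Icc] at h1 h2
        omega
      -- G.image F is a subset of the copy
      have hCsub : G.image F ⊆ (pathEdges r s).image (fun e => e.image f) := by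
        rw [pathEdges, Finset.image_image, hF, hG]
        simp only [Function.comp_def]
        exact Finset.image_subset_image (Finset.filter_subset _ _)
      calc (1:ℝ) = (k:ℝ) * (k:ℝ)⁻¹ := by
            field_simp
        _ ≤ (G.card : ℝ) * (k:ℝ)⁻¹ := by
            apply mul_le_mul_of_nonneg_right _ (by positivity)
            exact_mod_cast hGcard
        _ = ∑ _i ∈ G, (k:ℝ)⁻¹ := by rw [Finset.sum_const, nsmul_eq_mul]
        _ = ∑ i ∈ G, (if F i ∈ D then (k:ℝ)⁻¹ else 0) := by
            apply Finset.sum_congr rfl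
            intro i hi
            rw [if_pos (hFgood i hi)]
        _ = ∑ e ∈ G.image F, (if e ∈ D then (k:ℝ)⁻¹ else 0) :=
            (Finset.sum_image (f := fun e => if e ∈ D then (k:ℝ)⁻¹ else 0) hFinj).symm
        _ ≤ ∑ e ∈ (pathEdges r s).image (fun e => e.image f),
              (if e ∈ D then (k:ℝ)⁻¹ else 0) := by
            apply Finset.sum_le_sum_of_subset_of_nonneg hCsub
            intro e _ _
            split
            · positivity
            · exact le_rfl
    · -- total weight
      rw [← Finset.sum_filter]
      have hset : ((Finset.Icc 1 n).powersetCard r).filter (fun e => e ∈ D)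
          = (Finset.Icc 1 k).biUnion
            (fun j => (Finset.Icc ((j-1)*m + 1) (j*m)).powersetCard r) := by
        ext e
        simp only [Finset.mem_filter, Finset.mem_biUnion, Finset.mem_powersetCard,
          hDmem, Finset.mem_Icc]
        constructor
        · rintro ⟨⟨_, hcard⟩, j, hj1, hj2, hej⟩
          exact ⟨j, ⟨hj1, hj2⟩, hej, hcard⟩
        · rintro ⟨j, hj, hej, hcard⟩
          exact ⟨⟨hej.trans (hblksub j hj.1 hj.2), hcard⟩, j, hj.1, hj.2, hej⟩
      rw [hset, Finset.sum_const]
      have hdisj : ∀ x ∈ Finset.Icc 1 k, ∀ y ∈ Finset.Icc 1 k, x ≠ y →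
          Disjoint ((Finset.Icc ((x-1)*m + 1) (x*m)).powersetCard r)
            ((Finset.Icc ((y-1)*m + 1) (y*m)).powersetCard r) := by
        intro x hx y hy hxy
        rw [Finset.disjoint_left]
        intro e he he'
        rw [Finset.mem_powersetCard] at he he'
        have hne : e.Nonempty := by
          rw [← Finset.card_pos, he.2]; omega
        obtain ⟨v, hv⟩ := hne
        have h1 := he.1 hv
        have h2 := he'.1 hv
        rw [Finset.mem_Icc] at h1 h2
        rcases Nat.lt_or_ge x y with h | h
        · have : x * m ≤ (y - 1) * m := Nat.mul_le_mul_right m (by omega)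
          omega
        · have hyx : y < x := by omega
          have : y * m ≤ (x - 1) * m := Nat.mul_le_mul_right m (by omega)
          omega
      have hcardU : ((Finset.Icc 1 k).biUnion
          (fun j => (Finset.Icc ((j-1)*m + 1) (j*m)).powersetCard r)).card
          = k * m.choose r := by
        rw [Finset.card_biUnion hdisj]
        have hjc : ∀ j ∈ Finset.Icc 1 k,
            ((Finset.Icc ((j-1)*m + 1) (j*m)).powersetCard r).card = m.choose r := by
          intro j hj
          rw [Finset.mem_Icc] at hj
          rw [Finset.card_powersetCard, Nat.card_Icc]
          congr 1
          have : (j - 1) * m + m = j * m := by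
            conv_rhs => rw [← Nat.sub_add_cancel hj.1]
            rw [Nat.succ_mul]
          omega
        rw [Finset.sum_congr rfl hjc, Finset.sum_const, Nat.card_Icc, smul_eq_mul,
          Nat.add_sub_cancel]
      rw [hcardU, nsmul_eq_mul]
      push_cast
      rw [mul_comm ((k:ℝ)) ((m.choose r : ℝ)), mul_assoc,
        mul_inv_cancel₀ (show (k:ℝ) ≠ 0 from Nat.cast_ne_zero.mpr (by omega)), mul_one]
  refine ⟨hmain, ?_⟩
  obtain ⟨w, hw, hwsum⟩ := hmain
  apply csInf_le
  · refine ⟨0, ?_⟩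
    rintro x ⟨w', hw', rfl⟩
    exact Finset.sum_nonneg (fun e he => hw'.1 e he)
  · exact ⟨w, hw, hwsum.symm⟩
end

section
/- Let r and s be integers with 2 ≤ r ≤ s such that r divides s, let k = s/r, and let n be a positive integer divisible by k. Then ν(n, P^{(r)}_s) = τ*(n, P^{(r)}_s) = C(n/k, r), where C(n/k, r) is the binomial coefficient. -/
open Finset
open scoped Classical

section Stmt8Aux

/-- every edge of a copy of the path is an r-subset of [n] -/
lemma copy_edge_mem {n r s : ℕ} (hr : 1 ≤ r) (hrs : r ≤ s) {C : Finset (Finset ℕ)}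
    (hC : IsCopy n s (pathEdges r s) C) :
    ∀ e ∈ C, e ∈ (Finset.Icc 1 n).powersetCard r := by
  obtain ⟨f, hmono, hrange, rfl⟩ := hC
  intro e he
  rw [Finset.mem_image] at he
  obtain ⟨e₀, he₀, rfl⟩ := he
  rw [pathEdges, Finset.mem_image] at he₀
  obtain ⟨i, hi, rfl⟩ := he₀
  rw [Finset.mem_Icc] at hi
  have hsub : Finset.Icc i (i + r - 1) ⊆ Finset.Icc 1 s := by
    intro x hx
    rw [Finset.mem_Icc] at hx ⊢
    omega
  rw [Finset.mem_powersetCard]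
  constructor
  · intro x hx
    rw [Finset.mem_image] at hx
    obtain ⟨t, ht, rfl⟩ := hx
    exact hrange t (hsub ht)
  · rw [Finset.card_image_of_injOn (hmono.injOn.mono (by exact_mod_cast hsub)),
      Nat.card_Icc]
    omega

/-- the block weight function -/
noncomputable def blockW (k m : ℕ) : Finset ℕ → ℝ :=
  fun e => if ∃ q ∈ Finset.Icc 1 k, e ⊆ Finset.Icc ((q-1)*m+1) (q*m) then (k:ℝ)⁻¹ else 0

lemma blockW_nonneg (k m : ℕ) (e : Finset ℕ) : 0 ≤ blockW k m e := by
  unfold blockW; split <;> positivity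


lemma good_windows (r k : ℕ) (hr : 1 ≤ r) (hk : 1 ≤ k) (B : ℕ → ℕ)
    (hmono : ∀ t t', 1 ≤ t → t ≤ t' → t' ≤ k*r → B t ≤ B t')
    (h1 : ∀ t, 1 ≤ t → t ≤ k*r → 1 ≤ B t) (h2 : ∀ t, 1 ≤ t → t ≤ k*r → B t ≤ k) :
    k ≤ ((Finset.Icc 1 (k*r - r + 1)).filter (fun i => B (i + r - 1) = B i)).card := by
  have hrs : r ≤ k * r := Nat.le_mul_of_pos_left r hk
  set s := k * r with hs
  set L := s - r + 1 with hL
  set S := Finset.Icc 1 L with hS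
  set good := S.filter (fun i => B (i + r - 1) = B i) with hgood
  set bad := S.filter (fun i => ¬ B (i + r - 1) = B i) with hbad
  have hsum : good.card + bad.card = S.card := Finset.card_filter_add_card_filter_not _
  have hcardS : S.card = L := by rw [hS, Nat.card_Icc]; omega
  -- each window endpoint is in range
  have hwin : ∀ i ∈ S, 1 ≤ i ∧ i + r - 1 ≤ s := by
    intro i hi; rw [hS, Finset.mem_Icc] at hi; omega
  -- key sum bound over ℤ
  have keyD : ∀ i ∈ S, (0:ℤ) ≤ (B (i + r - 1) : ℤ) - B i := by
    intro i hi
    obtain ⟨hi1, hi2⟩ := hwin i hi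
    have := hmono i (i + r - 1) hi1 (by omega) hi2
    omega
  have keybad : ∀ i ∈ bad, (1:ℤ) ≤ (B (i + r - 1) : ℤ) - B i := by
    intro i hi
    rw [hbad, Finset.mem_filter] at hi
    have := keyD i hi.1
    have hne := hi.2
    omega
  -- telescoping: ∑_{i∈S} B(i+r-1) = ∑_{t ∈ Icc r s} B t
  have htel : ∑ i ∈ S, (B (i + r - 1) : ℤ) = ∑ t ∈ Finset.Icc r s, (B t : ℤ) := by
    apply Finset.sum_nbij' (fun i => i + r - 1) (fun t => t - r + 1)
    · intro i hi; rw [hS, Finset.mem_Icc] at hi; rw [Finset.mem_Icc]; omega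
    · intro t ht; rw [Finset.mem_Icc] at ht; rw [hS, Finset.mem_Icc]; omega
    · intro i hi; rw [hS, Finset.mem_Icc] at hi; omega
    · intro t ht; rw [Finset.mem_Icc] at ht; omega
    · intro i hi; rfl
  have split1 : ∑ t ∈ Finset.Icc 1 s, (B t : ℤ) = ∑ t ∈ Finset.Icc 1 (r-1), (B t : ℤ) + ∑ t ∈ Finset.Icc r s, (B t : ℤ) := by
    rw [← Finset.sum_union]
    · congr 1
      rw [Finset.ext_iff]; intro t; simp only [Finset.mem_union, Finset.mem_Icc]; omega
    · rw [Finset.disjoint_left]; intro t ht ht'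
      rw [Finset.mem_Icc] at ht ht'; omega
  have split2 : ∑ t ∈ Finset.Icc 1 s, (B t : ℤ) = ∑ t ∈ S, (B t : ℤ) + ∑ t ∈ Finset.Icc (L+1) s, (B t : ℤ) := by
    rw [← Finset.sum_union]
    · congr 1
      rw [Finset.ext_iff]; intro t; simp only [hS, Finset.mem_union, Finset.mem_Icc]; omega
    · rw [Finset.disjoint_left]; intro t ht ht'
      rw [hS, Finset.mem_Icc] at ht; rw [Finset.mem_Icc] at ht'; omega
  have bound1 : ∑ t ∈ Finset.Icc (L+1) s, (B t : ℤ) ≤ (r-1 : ℤ) * k := by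
    calc ∑ t ∈ Finset.Icc (L+1) s, (B t : ℤ) ≤ ∑ t ∈ Finset.Icc (L+1) s, (k:ℤ) := by
          apply Finset.sum_le_sum; intro t ht; rw [Finset.mem_Icc] at ht
          exact_mod_cast h2 t (by omega) ht.2
      _ = (Finset.Icc (L+1) s).card * k := by rw [Finset.sum_const, nsmul_eq_mul]
      _ = (r-1:ℤ) * k := by rw [Nat.card_Icc]; congr 1; push_cast [hL]; omega
  have bound2 : (r-1 : ℤ) * 1 ≤ ∑ t ∈ Finset.Icc 1 (r-1), (B t : ℤ) := by
    calc ((r:ℤ)-1) * 1 = (Finset.Icc 1 (r-1)).card * 1 := by rw [Nat.card_Icc]; push_cast; omega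
      _ = ∑ t ∈ Finset.Icc 1 (r-1), (1:ℤ) := by rw [Finset.sum_const, nsmul_eq_mul]
      _ ≤ _ := by
          apply Finset.sum_le_sum; intro t ht; rw [Finset.mem_Icc] at ht
          exact_mod_cast h1 t ht.1 (by omega)
  have keysum : ∑ i ∈ S, ((B (i + r - 1) : ℤ) - B i) ≤ (r-1) * (k-1) := by
    rw [Finset.sum_sub_distrib, htel]
    have : ∑ t ∈ Finset.Icc r s, (B t : ℤ) - ∑ t ∈ S, (B t : ℤ)
        = ∑ t ∈ Finset.Icc (L+1) s, (B t : ℤ) - ∑ t ∈ Finset.Icc 1 (r-1), (B t : ℤ) := by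
      omega
    rw [this]; nlinarith [bound1, bound2]
  have hbadle : (bad.card : ℤ) ≤ (r-1) * (k-1) := by
    calc (bad.card : ℤ) = ∑ i ∈ bad, (1:ℤ) := by rw [Finset.sum_const, nsmul_eq_mul, mul_one]
      _ ≤ ∑ i ∈ bad, ((B (i + r - 1) : ℤ) - B i) := Finset.sum_le_sum keybad
      _ ≤ ∑ i ∈ S, ((B (i + r - 1) : ℤ) - B i) := by
          apply Finset.sum_le_sum_of_subset_of_nonneg (Finset.filter_subset _ _)
          intro i hi _; exact keyD i hi
      _ ≤ _ := keysum
  -- arithmetic wrap-up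
  have hLval : (L : ℤ) = (r-1) * (k-1) + k := by
    have : (s : ℤ) = k * r := by exact_mod_cast hs
    push_cast [hL]
    rw [Int.ofNat_sub (by omega : r ≤ s)]  -- may fail; fallback below
    push_cast [this]
    ring
  omega

lemma blockW_feasible (r k m : ℕ) (hr : 1 ≤ r) (hk : 1 ≤ k) (hm : 1 ≤ m) :
    IsFracTransversal (k*m) r (k*r) (pathEdges r (k*r)) (blockW k m) := by
  have hrs : r ≤ k * r := Nat.le_mul_of_pos_left r hk
  refine ⟨fun e _ => blockW_nonneg k m e, ?_⟩
  rintro C ⟨f, hmono, hrange, rfl⟩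
  have hf1 : ∀ t, 1 ≤ t → t ≤ k*r → 1 ≤ f t ∧ f t ≤ k*m := by
    intro t h1 h2
    have := hrange t (by rw [Finset.mem_Icc]; omega)
    rw [Finset.mem_Icc] at this; exact this
  -- block function
  set B : ℕ → ℕ := fun t => (f t - 1) / m + 1 with hB
  have hBmono : ∀ t t', 1 ≤ t → t ≤ t' → t' ≤ k*r → B t ≤ B t' := by
    intro t t' h1 h2 h3
    have hft : f t ≤ f t' := by
      rcases eq_or_lt_of_le h2 with rfl | hlt
      · exact le_rfl
      · exact le_of_lt (hmono (by simp only [Finset.coe_Icc, Set.mem_Icc]; omega)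
          (by simp only [Finset.coe_Icc, Set.mem_Icc]; omega) hlt)
    show (f t - 1) / m + 1 ≤ (f t' - 1) / m + 1
    exact Nat.add_le_add_right (Nat.div_le_div_right (by omega)) 1
  have hB1 : ∀ t, 1 ≤ t → t ≤ k*r → 1 ≤ B t := fun t _ _ => by simp [hB]
  have hB2 : ∀ t, 1 ≤ t → t ≤ k*r → B t ≤ k := by
    intro t h1 h2
    have hf := hf1 t h1 h2
    have hlt : (f t - 1) / m < k := by
      rw [Nat.div_lt_iff_lt_mul hm]
      have hcomm : m * k = k * m := Nat.mul_comm m k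
      omega
    show (f t - 1) / m + 1 ≤ k
    omega
  -- B t = q means f t in block q
  have hblock : ∀ t q, 1 ≤ t → t ≤ k*r → B t = q → f t ∈ Finset.Icc ((q-1)*m+1) (q*m) := by
    intro t q h1 h2 hq
    have hf := hf1 t h1 h2
    have hdefB : B t = (f t - 1) / m + 1 := rfl
    have hq1 : 1 ≤ q := hq ▸ hB1 t h1 h2
    obtain ⟨q', rfl⟩ : ∃ q', q = q' + 1 := ⟨q - 1, by omega⟩
    have hdiv : (f t - 1) / m = q' := by
      have h := hdefB.symm.trans hq
      exact Nat.add_right_cancel h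
    have hexp : (q' + 1) * m = q' * m + m := by ring
    have hle : q' * m ≤ f t - 1 := by
      have h := Nat.div_mul_le_self (f t - 1) m
      rw [hdiv] at h; exact h
    have hlt : f t - 1 < (q' + 1) * m := by
      have hdm := Nat.div_add_mod (f t - 1) m
      have hmod : (f t - 1) % m < m := Nat.mod_lt _ (by omega)
      have hmul : m * ((f t - 1) / m) = m * q' := by rw [hdiv]
      have hcomm : m * q' = q' * m := Nat.mul_comm _ _
      omega
    rw [Finset.mem_Icc]
    have hsimp : (q' + 1 - 1) * m = q' * m := by simp
    omega
  -- good windows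
  set good := (Finset.Icc 1 (k*r - r + 1)).filter (fun i => B (i + r - 1) = B i) with hgood
  have hkgood : k ≤ good.card := good_windows r k hr hk B hBmono hB1 hB2
  -- map each good window to its edge
  have hwinsub : ∀ i ∈ Finset.Icc 1 (k*r - r + 1), Finset.Icc i (i+r-1) ⊆ Finset.Icc 1 (k*r) := by
    intro i hi x hx
    rw [Finset.mem_Icc] at hi hx ⊢
    omega
  have hinj : ∀ i ∈ good, ∀ j ∈ good, (Finset.Icc i (i+r-1)).image f = (Finset.Icc j (j+r-1)).image f → i = j := by
    intro i hi j hj heq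
    rw [hgood, Finset.mem_filter] at hi hj
    by_contra hne
    wlog hij : i < j generalizing i j
    · exact this j hj i hi heq.symm (Ne.symm hne) (by omega)
    have hi1 : 1 ≤ i ∧ i ≤ k*r - r + 1 := by have := hi.1; rwa [Finset.mem_Icc] at this
    have hfi : f i ∈ (Finset.Icc j (j+r-1)).image f := by
      rw [← heq, Finset.mem_image]; exact ⟨i, by rw [Finset.mem_Icc]; omega, rfl⟩
    rw [Finset.mem_image] at hfi
    obtain ⟨t, ht, hft⟩ := hfi
    have hiS : i ∈ Finset.Icc 1 (k*r) := hwinsub i hi.1 (by rw [Finset.mem_Icc]; omega)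
    have htS : t ∈ Finset.Icc 1 (k*r) := hwinsub j hj.1 ht
    have : t = i := hmono.injOn (by exact_mod_cast htS) (by exact_mod_cast hiS) hft
    rw [Finset.mem_Icc] at ht
    omega
  -- each good edge has weight 1/k
  have hweight : ∀ i ∈ good, blockW k m ((Finset.Icc i (i+r-1)).image f) = (k:ℝ)⁻¹ := by
    intro i hi
    rw [hgood, Finset.mem_filter, Finset.mem_Icc] at hi
    obtain ⟨⟨hi1, hi2⟩, hieq⟩ := hi
    rw [blockW, if_pos]
    refine ⟨B i, ?_, ?_⟩
    · rw [Finset.mem_Icc]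
      exact ⟨hB1 i hi1 (by omega), hB2 i hi1 (by omega)⟩
    · intro x hx
      rw [Finset.mem_image] at hx
      obtain ⟨t, ht, rfl⟩ := hx
      rw [Finset.mem_Icc] at ht
      have h1t : 1 ≤ t := by omega
      have h2t : t ≤ k*r := by omega
      have : B t = B i := by
        have l1 := hBmono i t hi1 ht.1 h2t
        have l2 := hBmono t (i + r - 1) h1t ht.2 (by omega)
        omega
      exact hblock t (B i) h1t h2t this
  -- sum bound
  have hsub : good.image (fun i => (Finset.Icc i (i+r-1)).image f) ⊆ (pathEdges r (k*r)).image (fun e => e.image f) := by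
    intro e he
    rw [Finset.mem_image] at he
    obtain ⟨i, hi, rfl⟩ := he
    rw [Finset.mem_image]
    refine ⟨Finset.Icc i (i+r-1), ?_, rfl⟩
    rw [pathEdges, Finset.mem_image]
    refine ⟨i, ?_, rfl⟩
    rw [hgood, Finset.mem_filter] at hi
    have := hi.1
    rwa [show k*r - r + 1 = k*r - r + 1 from rfl] at this
  calc (1:ℝ) = k * (k:ℝ)⁻¹ := by
        rw [mul_inv_cancel₀]; positivity
    _ ≤ good.card * (k:ℝ)⁻¹ := by
        apply mul_le_mul_of_nonneg_right _ (by positivity)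
        exact_mod_cast hkgood
    _ = ∑ i ∈ good, (k:ℝ)⁻¹ := by rw [Finset.sum_const, nsmul_eq_mul]
    _ = ∑ i ∈ good, blockW k m ((Finset.Icc i (i+r-1)).image f) := by
        apply Finset.sum_congr rfl
        intro i hi; rw [hweight i hi]
    _ = ∑ e ∈ good.image (fun i => (Finset.Icc i (i+r-1)).image f), blockW k m e := by
        rw [Finset.sum_image hinj]
    _ ≤ ∑ e ∈ (pathEdges r (k*r)).image (fun e => e.image f), blockW k m e := by
        apply Finset.sum_le_sum_of_subset_of_nonneg hsub
        intro e _ _; exact blockW_nonneg k m e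

lemma blockW_total (r k m : ℕ) (hr : 1 ≤ r) (hk : 1 ≤ k) (hm : 1 ≤ m) :
    ∑ e ∈ (Finset.Icc 1 (k*m)).powersetCard r, blockW k m e = (m.choose r : ℝ) := by
  classical
  set F := (Finset.Icc 1 (k*m)).powersetCard r with hF
  have hcount : (F.filter (fun e => ∃ q ∈ Finset.Icc 1 k, e ⊆ Finset.Icc ((q-1)*m+1) (q*m))).card
      = k * m.choose r := by
    have heq : F.filter (fun e => ∃ q ∈ Finset.Icc 1 k, e ⊆ Finset.Icc ((q-1)*m+1) (q*m))
        = (Finset.Icc 1 k).biUnion (fun q => (Finset.Icc ((q-1)*m+1) (q*m)).powersetCard r) := by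
      ext e
      simp only [Finset.mem_filter, Finset.mem_biUnion, Finset.mem_powersetCard, hF]
      constructor
      · rintro ⟨⟨hsub, hcard⟩, q, hq, hsubq⟩
        exact ⟨q, hq, hsubq, hcard⟩
      · rintro ⟨q, hq, hsubq, hcard⟩
        rw [Finset.mem_Icc] at hq
        refine ⟨⟨?_, hcard⟩, q, by rw [Finset.mem_Icc]; exact hq, hsubq⟩
        intro x hx
        have := hsubq hx
        rw [Finset.mem_Icc] at this ⊢
        have : q * m ≤ k * m := Nat.mul_le_mul_right m hq.2
        constructor
        · omega
        · have h2 := (hsubq hx); rw [Finset.mem_Icc] at h2; omega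
    rw [heq, Finset.card_biUnion]
    · have : ∀ q ∈ Finset.Icc 1 k, ((Finset.Icc ((q-1)*m+1) (q*m)).powersetCard r).card = m.choose r := by
        intro q hq
        rw [Finset.mem_Icc] at hq
        rw [Finset.card_powersetCard, Nat.card_Icc]
        congr 1
        have h1 : (q-1)*m + m = q * m := by
          obtain ⟨q', rfl⟩ : ∃ q', q = q' + 1 := ⟨q - 1, by omega⟩
          simp [Nat.add_sub_cancel]; ring
        omega
      rw [Finset.sum_congr rfl this, Finset.sum_const, Nat.card_Icc, smul_eq_mul]
      congr 1
    · intro q hq q' hq' hne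
      rw [Finset.mem_coe] at hq hq'
      rw [Function.onFun, Finset.disjoint_left]
      intro e he he'
      rw [Finset.mem_powersetCard] at he he'
      have hcard := he.1
      have hemp : e = ∅ := by
        by_contra hne'
        obtain ⟨x, hx⟩ := Finset.nonempty_iff_ne_empty.mpr hne'
        have hq1 : 1 ≤ q := by rw [Finset.mem_Icc] at hq; exact hq.1
        have hq'1 : 1 ≤ q' := by rw [Finset.mem_Icc] at hq'; exact hq'.1
        have hh1 := he.1 hx
        have hh2 := he'.1 hx
        rw [Finset.mem_Icc] at hh1 hh2
        rcases Nat.lt_or_ge q q' with h | h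
        · have hmul : q * m ≤ (q'-1) * m := Nat.mul_le_mul_right m (by omega)
          omega
        · have hlt : q' < q := by omega
          have hmul : q' * m ≤ (q-1) * m := Nat.mul_le_mul_right m (by omega)
          omega
      rw [hemp] at he
      have := he.2
      simp at this
      omega
  calc ∑ e ∈ F, blockW k m e
      = ∑ e ∈ F.filter (fun e => ∃ q ∈ Finset.Icc 1 k, e ⊆ Finset.Icc ((q-1)*m+1) (q*m)), (k:ℝ)⁻¹ := by
        rw [Finset.sum_filter]
        apply Finset.sum_congr rfl
        intro e _
        simp only [blockW]
    _ = (k * m.choose r : ℕ) * (k:ℝ)⁻¹ := by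
        rw [Finset.sum_const, hcount, nsmul_eq_mul]
    _ = (m.choose r : ℝ) := by
        push_cast
        field_simp

/-- weak LP duality -/
lemma pack_le_frac {n r s : ℕ} (hr : 1 ≤ r) (hrs : r ≤ s)
    {P : Finset (Finset (Finset ℕ))} (hP : IsPacking n s (pathEdges r s) P)
    {w : Finset ℕ → ℝ} (hw0 : ∀ e ∈ (Finset.Icc 1 n).powersetCard r, 0 ≤ w e)
    (hw1 : ∀ C : Finset (Finset ℕ), IsCopy n s (pathEdges r s) C → 1 ≤ ∑ e ∈ C, w e) :
    (P.card : ℝ) ≤ ∑ e ∈ (Finset.Icc 1 n).powersetCard r, w e := by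
  have hdisj : (P : Set (Finset (Finset ℕ))).PairwiseDisjoint id := by
    intro C hC C' hC' hne
    exact hP.2 C (by exact_mod_cast hC) C' (by exact_mod_cast hC') hne
  calc (P.card : ℝ) = ∑ _C ∈ P, (1:ℝ) := by rw [Finset.sum_const, nsmul_eq_mul, mul_one]
    _ ≤ ∑ C ∈ P, ∑ e ∈ C, w e := by
        apply Finset.sum_le_sum
        intro C hC
        exact hw1 C (hP.1 C hC)
    _ = ∑ e ∈ P.biUnion id, w e := (Finset.sum_biUnion hdisj).symm
    _ ≤ ∑ e ∈ (Finset.Icc 1 n).powersetCard r, w e := by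
        apply Finset.sum_le_sum_of_subset_of_nonneg
        · intro e he
          rw [Finset.mem_biUnion] at he
          obtain ⟨C, hC, he⟩ := he
          exact copy_edge_mem hr hrs (hP.1 C hC) e he
        · intro e he _; exact hw0 e he

/-- hitting every residue in a window of r consecutive integers -/
lemma mod_hit (r c j : ℕ) (hr : 0 < r) (hj : j < r) :
    ∃ d, c ≤ d ∧ d ≤ c + (r-1) ∧ d % r = j := by
  obtain ⟨q0, b, hdm, hb⟩ : ∃ q0 b, r * q0 + b = c ∧ b < r :=
    ⟨c/r, c%r, Nat.div_add_mod c r, Nat.mod_lt _ hr⟩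
  by_cases hcase : j < b
  · refine ⟨r*q0 + r + j, by omega, by omega, ?_⟩
    rw [show r*q0 + r + j = r*(q0+1) + j by ring, Nat.mul_add_mod]
    exact Nat.mod_eq_of_lt hj
  · refine ⟨r*q0 + j, by omega, by omega, ?_⟩
    rw [Nat.mul_add_mod]
    exact Nat.mod_eq_of_lt hj

/-- the embedding used in the packing construction -/
noncomputable def embF (r m : ℕ) (A : Finset ℕ) : ℕ → ℕ := fun t =>
  if h : A.card = r ∧ 0 < r then
    ((t-1)/r)*m + (A.orderEmbOfFin h.1 ⟨(t-1) % r, Nat.mod_lt _ h.2⟩ : ℕ) else 0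

lemma pack_exists (r k m : ℕ) (hr : 1 ≤ r) (hk : 1 ≤ k) (hm : 1 ≤ m) :
    ∃ P : Finset (Finset (Finset ℕ)),
      IsPacking (k*m) (k*r) (pathEdges r (k*r)) P ∧ P.card = m.choose r := by
  classical
  have hrpos : 0 < r := hr
  -- the recovery function
  set recov : Finset ℕ → Finset ℕ := fun e => e.image (fun x => (x-1) % m + 1) with hrecov
  -- facts about embF for suitable A
  have main : ∀ A ∈ (Finset.Icc 1 m).powersetCard r,
      StrictMonoOn (embF r m A) ↑(Finset.Icc 1 (k*r)) ∧
      (∀ v ∈ Finset.Icc 1 (k*r), embF r m A v ∈ Finset.Icc 1 (k*m)) ∧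
      (∀ e ∈ (pathEdges r (k*r)).image (fun e => e.image (embF r m A)), recov e = A) := by
    intro A hA
    rw [Finset.mem_powersetCard] at hA
    obtain ⟨hAsub, hAcard⟩ := hA
    have hcond : A.card = r ∧ 0 < r := ⟨hAcard, hrpos⟩
    set a : Fin r → ℕ := fun j => (A.orderEmbOfFin hAcard j : ℕ) with ha
    have hval : ∀ j : Fin r, 1 ≤ a j ∧ a j ≤ m := by
      intro j
      have := A.orderEmbOfFin_mem hAcard j
      have := hAsub this
      rwa [Finset.mem_Icc] at this
    have hamono : StrictMono a := fun i j hij => (A.orderEmbOfFin hAcard).strictMono hij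
    have hfeq : ∀ t, embF r m A t = ((t-1)/r)*m + a ⟨(t-1) % r, Nat.mod_lt _ hrpos⟩ := by
      intro t
      rw [embF, dif_pos hcond]
    -- strict monotonicity
    have hsm : StrictMonoOn (embF r m A) ↑(Finset.Icc 1 (k*r)) := by
      intro t ht t' ht' hlt
      simp only [Finset.coe_Icc, Set.mem_Icc] at ht ht'
      rw [hfeq, hfeq]
      obtain ⟨q, p, hdm, hp⟩ : ∃ q p, r * q + p = t - 1 ∧ p < r :=
        ⟨(t-1)/r, (t-1)%r, Nat.div_add_mod _ _, Nat.mod_lt _ hrpos⟩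
      obtain ⟨q', p', hdm', hp'⟩ : ∃ q' p', r * q' + p' = t' - 1 ∧ p' < r :=
        ⟨(t'-1)/r, (t'-1)%r, Nat.div_add_mod _ _, Nat.mod_lt _ hrpos⟩
      have hqval : (t-1)/r = q := by
        rw [← hdm, Nat.mul_add_div hrpos, Nat.div_eq_of_lt hp]; omega
      have hpval : (t-1)%r = p := by rw [← hdm, Nat.mul_add_mod]; exact Nat.mod_eq_of_lt hp
      have hqval' : (t'-1)/r = q' := by
        rw [← hdm', Nat.mul_add_div hrpos, Nat.div_eq_of_lt hp']; omega
      have hpval' : (t'-1)%r = p' := by rw [← hdm', Nat.mul_add_mod]; exact Nat.mod_eq_of_lt hp'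
      simp only [hqval, hpval, hqval', hpval']
      rcases Nat.lt_or_ge q q' with hq | hq
      · -- different quotients
        have h1 : a ⟨p, hp⟩ ≤ m := (hval _).2
        have h2 : 1 ≤ a ⟨p', hp'⟩ := (hval _).1
        calc q * m + a ⟨p, hp⟩ ≤ q * m + m := Nat.add_le_add_left h1 _
          _ = (q+1) * m := by ring
          _ ≤ q' * m := Nat.mul_le_mul_right m hq
          _ < q' * m + a ⟨p', hp'⟩ := Nat.lt_add_of_pos_right (by omega)
      · have hqle : q ≤ q' := by
          have h := Nat.div_le_div_right (c := r) (show t - 1 ≤ t' - 1 by omega)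
          rwa [hqval, hqval'] at h
        have hqq : q = q' := le_antisymm hqle hq
        subst hqq
        have h5 : r * q + p < r * q + p' := by rw [hdm, hdm']; omega
        have hpp : p < p' := by omega
        have := hamono (show (⟨p, hp⟩ : Fin r) < ⟨p', hp'⟩ from hpp)
        exact Nat.add_lt_add_left this _
    refine ⟨hsm, ?_, ?_⟩
    · -- range
      intro t htmem
      rw [Finset.mem_Icc] at htmem
      rw [hfeq, Finset.mem_Icc]
      have h1 := (hval ⟨(t-1) % r, Nat.mod_lt _ hrpos⟩).1
      have h2 := (hval ⟨(t-1) % r, Nat.mod_lt _ hrpos⟩).2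
      have hq : (t-1)/r < k := by
        rw [Nat.div_lt_iff_lt_mul hrpos]
        have : k * r = r * k := Nat.mul_comm _ _
        omega
      have h3 : ((t-1)/r) * m + m ≤ k * m := by
        have : ((t-1)/r + 1) * m ≤ k * m := Nat.mul_le_mul_right m (by omega)
        have hh : ((t-1)/r + 1) * m = ((t-1)/r) * m + m := by ring
        omega
      omega
    · -- recovery
      intro e he
      rw [Finset.mem_image] at he
      obtain ⟨e₀, he₀, rfl⟩ := he
      rw [pathEdges, Finset.mem_image] at he₀
      obtain ⟨i, hi, rfl⟩ := he₀
      rw [Finset.mem_Icc] at hi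
      simp only [hrecov]
      rw [Finset.image_image]
      have hgf : ∀ t ∈ Finset.Icc i (i + r - 1),
          ((fun x => (x-1) % m + 1) ∘ embF r m A) t = a ⟨(t-1) % r, Nat.mod_lt _ hrpos⟩ := by
        intro t _
        simp only [Function.comp_apply]
        rw [hfeq]
        have h1 := (hval ⟨(t-1) % r, Nat.mod_lt _ hrpos⟩).1
        have h2 := (hval ⟨(t-1) % r, Nat.mod_lt _ hrpos⟩).2
        set v := a ⟨(t-1) % r, Nat.mod_lt _ hrpos⟩ with hv
        have heq1 : ((t-1)/r) * m + v - 1 = m * ((t-1)/r) + (v - 1) := by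
          have : ((t-1)/r) * m = m * ((t-1)/r) := Nat.mul_comm _ _
          omega
        rw [heq1, Nat.mul_add_mod, Nat.mod_eq_of_lt (by omega : v - 1 < m)]
        omega
      rw [Finset.image_congr hgf]
      -- now show the image of residues is A
      ext x
      rw [Finset.mem_image]
      constructor
      · rintro ⟨t, ht, rfl⟩
        exact A.orderEmbOfFin_mem hAcard _
      · intro hx
        have hrange := A.range_orderEmbOfFin hAcard
        have : x ∈ Set.range (A.orderEmbOfFin hAcard) := by rw [hrange]; exact_mod_cast hx
        obtain ⟨j, hj⟩ := this
        obtain ⟨d, hd1, hd2, hd3⟩ := mod_hit r (i-1) j.1 hrpos j.2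
        refine ⟨d + 1, ?_, ?_⟩
        · rw [Finset.mem_Icc]; omega
        · have hmod : (d + 1 - 1) % r = j.1 := by simpa using hd3
          show a ⟨(d+1-1) % r, _⟩ = x
          have hfin : (⟨(d+1-1) % r, Nat.mod_lt _ hrpos⟩ : Fin r) = j := Fin.ext hmod
          rw [ha, hfin]
          exact hj
  -- assemble the packing
  set pc := (Finset.Icc 1 m).powersetCard r with hpc
  set CC : Finset ℕ → Finset (Finset ℕ) :=
    fun A => (pathEdges r (k*r)).image (fun e => e.image (embF r m A)) with hCC
  have hcopy : ∀ A ∈ pc, IsCopy (k*m) (k*r) (pathEdges r (k*r)) (CC A) :=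
    fun A hA => ⟨embF r m A, (main A hA).1, (main A hA).2.1, rfl⟩
  have hrec : ∀ A ∈ pc, ∀ e ∈ CC A, recov e = A := fun A hA => (main A hA).2.2
  have hCne : ∀ A, (CC A).Nonempty := by
    intro A
    apply Finset.Nonempty.image
    rw [pathEdges]
    apply Finset.Nonempty.image
    rw [Finset.nonempty_Icc]
    omega
  have hdisj : ∀ A ∈ pc, ∀ A' ∈ pc, A ≠ A' → Disjoint (CC A) (CC A') := by
    intro A hA A' hA' hne
    rw [Finset.disjoint_left]
    intro e he he'
    exact hne ((hrec A hA e he).symm.trans (hrec A' hA' e he'))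
  have hCinj : ∀ A ∈ pc, ∀ A' ∈ pc, CC A = CC A' → A = A' := by
    intro A hA A' hA' heq
    obtain ⟨e, he⟩ := hCne A
    have he' : e ∈ CC A' := heq ▸ he
    exact (hrec A hA e he).symm.trans (hrec A' hA' e he')
  refine ⟨pc.image CC, ⟨?_, ?_⟩, ?_⟩
  · intro C hC
    rw [Finset.mem_image] at hC
    obtain ⟨A, hA, rfl⟩ := hC
    exact hcopy A hA
  · intro C hC C' hC' hne
    rw [Finset.mem_image] at hC hC'
    obtain ⟨A, hA, rfl⟩ := hC
    obtain ⟨A', hA', rfl⟩ := hC'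
    exact hdisj A hA A' hA' (fun h => hne (by rw [h]))
  · rw [Finset.card_image_of_injOn hCinj, hpc, Finset.card_powersetCard, Nat.card_Icc]
    simp

end Stmt8Aux

/-- If `2 ≤ r ≤ s`, `r ∣ s`, `k = s/r` and `k ∣ n` with `n > 0`, then
`ν(n, P^{(r)}_s) = τ*(n, P^{(r)}_s) = C(n/k, r)`. -/
theorem stmt8 (r s k n : ℕ) (hr : 2 ≤ r) (hrs : r ≤ s) (hdvd : r ∣ s) (hk : k = s / r)
    (hn : 0 < n) (hkn : k ∣ n) :
    nu n s (pathEdges r s) = (n / k).choose r ∧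
    tauStar n r s (pathEdges r s) = ((n / k).choose r : ℝ) := by
  classical
  have hr1 : 1 ≤ r := by omega
  have hrpos : 0 < r := by omega
  -- normalize s and n
  have hs : s = k * r := by
    rw [hk]
    exact (Nat.div_mul_cancel hdvd).symm
  have hk1 : 1 ≤ k := by
    rw [hk]
    exact Nat.one_le_div_iff hrpos |>.mpr hrs
  obtain ⟨m, rfl⟩ : ∃ m, n = k * m := hkn
  have hm1 : 1 ≤ m := by
    rcases Nat.eq_zero_or_pos m with h | h
    · subst h; simp at hn
    · exact h
  have hnk : k * m / k = m := Nat.mul_div_cancel_left m (by omega)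
  rw [hnk]
  subst hs
  -- main ingredients
  have Hfeas := blockW_feasible r k m hr1 hk1 hm1
  have Htot := blockW_total r k m hr1 hk1 hm1
  obtain ⟨P₀, hP₀, hP₀card⟩ := pack_exists r k m hr1 hk1 hm1
  have hrkr : r ≤ k * r := Nat.le_mul_of_pos_left r (by omega)
  constructor
  · -- packing number
    apply le_antisymm
    · refine csSup_le ?_ ?_
      · exact ⟨P₀.card, ⟨P₀, hP₀, rfl⟩⟩
      rintro p ⟨P, hP, rfl⟩
      have := pack_le_frac hr1 hrkr hP Hfeas.1 Hfeas.2
      rw [Htot] at this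
      exact_mod_cast this
    · apply le_csSup
      · refine ⟨m.choose r, ?_⟩
        rintro p ⟨P, hP, rfl⟩
        have := pack_le_frac hr1 hrkr hP Hfeas.1 Hfeas.2
        rw [Htot] at this
        exact_mod_cast this
      · exact ⟨P₀, hP₀, hP₀card⟩
  · -- fractional transversal number
    have hlb : ∀ x ∈ {x : ℝ | ∃ w : Finset ℕ → ℝ, IsFracTransversal (k*m) r (k*r) (pathEdges r (k*r)) w ∧
        x = ∑ e ∈ (Finset.Icc 1 (k*m)).powersetCard r, w e}, ((m.choose r : ℕ) : ℝ) ≤ x := by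
      rintro x ⟨w, hw, rfl⟩
      have := pack_le_frac hr1 hrkr hP₀ hw.1 hw.2
      rw [hP₀card] at this
      exact this
    have hmem : ((m.choose r : ℕ) : ℝ) ∈ {x : ℝ | ∃ w : Finset ℕ → ℝ, IsFracTransversal (k*m) r (k*r) (pathEdges r (k*r)) w ∧
        x = ∑ e ∈ (Finset.Icc 1 (k*m)).powersetCard r, w e} := ⟨blockW k m, Hfeas, Htot.symm⟩
    apply le_antisymm
    · exact csInf_le ⟨_, hlb⟩ hmem
    · exact le_csInf ⟨_, hmem⟩ hlb
end
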